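/- arXiv:2307.15102 — 3 statements merged into one kernel-verified Lean document; each statement's English description precedes it below -/
import Mathlib

section
/- Let I ⊆ ℝ be an interval, n ∈ ℕ, A : I → ℂ^{n×n} a continuous matrix function, f : I → ℂ^n a continuous vector function, and fix a norm ‖·‖ on ℂ^n. Then the inhomogeneous equation x' = A(t)x + f(t) is Ulam stable on I with Ulam constant K if and only if the homogeneous equation x' = A(t)x is Ulam stable on I with the same Ulam constant K. -/
open MeasureTheory Filter Set
open scoped Topology

noncomputable section

namespace UlamAux

variable {n : ℕ}

/-- Entrywise-sum bound for `mulVec` in the sup norm on `Fin n → ℂ`. -/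
lemma norm_mulVec_le (B : Matrix (Fin n) (Fin n) ℂ) (x : Fin n → ℂ) :
    ‖B.mulVec x‖ ≤ (∑ i, ∑ j, ‖B i j‖) * ‖x‖ := by
  have h0 : (0:ℝ) ≤ (∑ i, ∑ j, ‖B i j‖) * ‖x‖ := by positivity
  rw [pi_norm_le_iff_of_nonneg h0]
  intro i
  have : B.mulVec x i = ∑ j, B i j * x j := by
    simp [Matrix.mulVec, dotProduct]
  rw [this]
  calc ‖∑ j, B i j * x j‖ ≤ ∑ j, ‖B i j * x j‖ := norm_sum_le _ _
    _ ≤ ∑ j, ‖B i j‖ * ‖x‖ := by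
        refine Finset.sum_le_sum fun j _ => ?_
        rw [norm_mul]
        exact mul_le_mul_of_nonneg_left (norm_le_pi_norm x j) (norm_nonneg _)
    _ = (∑ j, ‖B i j‖) * ‖x‖ := by rw [Finset.sum_mul]
    _ ≤ (∑ i, ∑ j, ‖B i j‖) * ‖x‖ := by
        refine mul_le_mul_of_nonneg_right ?_ (norm_nonneg _)
        exact Finset.single_le_sum (f := fun i => ∑ j, ‖B i j‖)
          (fun i _ => by positivity) (Finset.mem_univ i)

lemma lipschitz_affine {B : Matrix (Fin n) (Fin n) ℂ} {c : Fin n → ℂ} {M : ℝ}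
    (hM : ∑ i, ∑ j, ‖B i j‖ ≤ M) :
    LipschitzWith (Real.toNNReal M) (fun x => B.mulVec x + c) := by
  have hM0 : (0:ℝ) ≤ M := le_trans (by positivity) hM
  refine LipschitzWith.of_dist_le_mul fun x y => ?_
  have : (B.mulVec x + c) - (B.mulVec y + c) = B.mulVec (x - y) := by
    rw [Matrix.mulVec_sub]; abel
  rw [dist_eq_norm, this, dist_eq_norm]
  calc ‖B.mulVec (x - y)‖ ≤ (∑ i, ∑ j, ‖B i j‖) * ‖x - y‖ := norm_mulVec_le _ _
    _ ≤ M * ‖x - y‖ := mul_le_mul_of_nonneg_right hM (norm_nonneg _)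
    _ = (Real.toNNReal M) * ‖x - y‖ := by rw [Real.coe_toNNReal _ hM0]

lemma continuousOn_mulVec {A : ℝ → Matrix (Fin n) (Fin n) ℂ} {x : ℝ → Fin n → ℂ}
    {s : Set ℝ} (hA : ∀ i j, ContinuousOn (fun t => A t i j) s)
    (hx : ContinuousOn x s) :
    ContinuousOn (fun t => (A t).mulVec (x t)) s := by
  apply continuousOn_pi.2
  intro i
  have : (fun t => (A t).mulVec (x t) i) = fun t => ∑ j, A t i j * x t j := by
    funext t; simp [Matrix.mulVec, dotProduct]
  rw [this]
  exact continuousOn_finset_sum _ fun j _ =>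
    (hA i j).mul ((continuous_apply j).comp_continuousOn hx)

lemma continuousOn_sumnorm {A : ℝ → Matrix (Fin n) (Fin n) ℂ}
    {s : Set ℝ} (hA : ∀ i j, ContinuousOn (fun t => A t i j) s) :
    ContinuousOn (fun t => ∑ i, ∑ j, ‖A t i j‖) s :=
  continuousOn_finset_sum _ fun i _ => continuousOn_finset_sum _ fun j _ => (hA i j).norm

end UlamAux

section Step

variable {n : ℕ} {A : ℝ → Matrix (Fin n) (Fin n) ℂ} {f : ℝ → Fin n → ℂ}

/-- One Picard–Lindelöf step: solution on a short interval with prescribed value at any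
point of the interval. -/
lemma step {a b M F : ℝ} (hab : a ≤ b)
    (hA : ∀ i j, ContinuousOn (fun t => A t i j) (Icc a b))
    (hf : ContinuousOn f (Icc a b))
    (hM0 : 0 ≤ M) (hF0 : 0 ≤ F)
    (hM : ∀ t ∈ Icc a b, ∑ i, ∑ j, ‖A t i j‖ ≤ M)
    (hF : ∀ t ∈ Icc a b, ‖f t‖ ≤ F)
    {c d t₁ : ℝ} (hcd : Icc c d ⊆ Icc a b) (ht₁ : t₁ ∈ Icc c d)
    (hlen : d - c ≤ 1 / (2 * (M + 1))) (x₀ : Fin n → ℂ) :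
    ∃ x : ℝ → Fin n → ℂ, x t₁ = x₀ ∧
      ∀ t ∈ Icc c d, HasDerivWithinAt x ((A t).mulVec (x t) + f t) (Icc c d) t := by
  set h : ℝ := 1 / (2 * (M + 1)) with hh
  have hh0 : 0 < h := by positivity
  have hMh : M * h ≤ 1 / 2 := by
    rw [hh]
    rw [mul_one_div, div_le_div_iff₀ (by positivity) (by norm_num)]
    nlinarith
  set R : ℝ := 2 * h * (M * ‖x₀‖ + F) + 1 with hR
  have hR0 : 0 ≤ R := by positivity
  set C : ℝ := M * (‖x₀‖ + R) + F with hC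
  have hC0 : 0 ≤ C := by positivity
  have hpl : IsPicardLindelof (fun t x => (A t).mulVec x + f t) (tmin := c) (tmax := d)
      ⟨t₁, ht₁⟩ x₀ (Real.toNNReal R) 0 (Real.toNNReal C) (Real.toNNReal M) := by
    constructor
    · intro t ht
      exact (UlamAux.lipschitz_affine (hM t (hcd ht))).lipschitzOnWith
    · intro x _
      exact ((UlamAux.continuousOn_mulVec hA (continuousOn_const (c := x))).add hf).mono hcd
    · intro t ht x hx
      have hxn : ‖x‖ ≤ ‖x₀‖ + R := by
        have := mem_closedBall_iff_norm.1 hx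
        rw [Real.coe_toNNReal _ hR0] at this
        calc ‖x‖ = ‖x - x₀ + x₀‖ := by rw [sub_add_cancel]
          _ ≤ ‖x - x₀‖ + ‖x₀‖ := norm_add_le _ _
          _ ≤ R + ‖x₀‖ := by linarith
          _ = ‖x₀‖ + R := by ring
      rw [Real.coe_toNNReal _ hC0]
      calc ‖(A t).mulVec x + f t‖ ≤ ‖(A t).mulVec x‖ + ‖f t‖ := norm_add_le _ _
        _ ≤ (∑ i, ∑ j, ‖A t i j‖) * ‖x‖ + F :=
            add_le_add (UlamAux.norm_mulVec_le _ _) (hF t (hcd ht))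
        _ ≤ M * (‖x₀‖ + R) + F := by
            refine add_le_add_left ?_ F
            calc (∑ i, ∑ j, ‖A t i j‖) * ‖x‖ ≤ M * ‖x‖ :=
                  mul_le_mul_of_nonneg_right (hM t (hcd ht)) (norm_nonneg _)
              _ ≤ M * (‖x₀‖ + R) := mul_le_mul_of_nonneg_left hxn hM0
    · have hmax : max (d - t₁) (t₁ - c) ≤ h := by
        refine max_le ?_ ?_ <;> [skip; skip] <;>
          · obtain ⟨h1, h2⟩ := ht₁; linarith
      rw [Real.coe_toNNReal _ hC0, Real.coe_toNNReal _ hR0, NNReal.coe_zero, sub_zero]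
      calc C * max (d - t₁) (t₁ - c) ≤ C * h := mul_le_mul_of_nonneg_left hmax hC0
        _ ≤ R := by
            have hx0 : (0:ℝ) ≤ ‖x₀‖ := norm_nonneg _
            nlinarith
  obtain ⟨x, hx0, hx⟩ := hpl.exists_eq_forall_mem_Icc_hasDerivWithinAt₀
  exact ⟨x, hx0, hx⟩

/-- Gluing two solutions at a common endpoint. -/
lemma glue {c d b : ℝ} (hcd : c ≤ d) (hdb : d ≤ b) (w : ℝ → (Fin n → ℂ) → (Fin n → ℂ))
    {y z : ℝ → Fin n → ℂ}
    (hy : ∀ t ∈ Icc c d, HasDerivWithinAt y (w t (y t)) (Icc c d) t)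
    (hz : ∀ t ∈ Icc d b, HasDerivWithinAt z (w t (z t)) (Icc d b) t)
    (hyz : y d = z d) :
    ∃ x : ℝ → Fin n → ℂ, (∀ t ≤ d, x t = y t) ∧ (∀ t, d ≤ t → x t = z t) ∧
      ∀ t ∈ Icc c b, HasDerivWithinAt x (w t (x t)) (Icc c b) t := by
  refine ⟨fun t => if t ≤ d then y t else z t, fun t ht => if_pos ht, ?_, ?_⟩
  · intro t ht
    rcases eq_or_lt_of_le ht with h | h
    · simp [← h, hyz]
    · simp only [if_neg (not_le.2 h)]
  set x : ℝ → Fin n → ℂ := fun t => if t ≤ d then y t else z t with hxdef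
  have hxy : ∀ t ∈ Icc c d, x t = y t := fun t ht => if_pos ht.2
  have hxz : ∀ t ∈ Icc d b, x t = z t := by
    intro t ht
    rcases eq_or_lt_of_le ht.1 with h | h
    · simp [x, ← h, hyz]
    · exact if_neg (not_le.2 h)
  have hxd : ∀ t ∈ Icc c d, HasDerivWithinAt x (w t (x t)) (Icc c d) t := by
    intro t ht
    rw [hxy t ht]
    exact (hy t ht).congr hxy (hxy t ht)
  have hxb : ∀ t ∈ Icc d b, HasDerivWithinAt x (w t (x t)) (Icc d b) t := by
    intro t ht
    rw [hxz t ht]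
    exact (hz t ht).congr hxz (hxz t ht)
  intro t ht
  rcases lt_trichotomy t d with h | h | h
  · refine (hxd t ⟨ht.1, h.le⟩).mono_of_mem_nhdsWithin ?_
    rw [mem_nhdsWithin]
    exact ⟨Iio d, isOpen_Iio, h, fun s hs => ⟨hs.2.1, hs.1.le⟩⟩
  · subst h
    have := (hxd t ⟨ht.1, le_rfl⟩).union (hxb t ⟨le_rfl, ht.2⟩)
    rwa [Icc_union_Icc_eq_Icc ht.1 ht.2] at this
  · refine (hxb t ⟨h.le, ht.2⟩).mono_of_mem_nhdsWithin ?_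
    rw [mem_nhdsWithin]
    exact ⟨Ioi d, isOpen_Ioi, h, fun s hs => ⟨hs.1.le, hs.2.2⟩⟩

end Step

section Extend

variable {n : ℕ} {A : ℝ → Matrix (Fin n) (Fin n) ℂ} {f : ℝ → Fin n → ℂ} {a b M F : ℝ}

lemma extend_right (hab : a ≤ b)
    (hA : ∀ i j, ContinuousOn (fun t => A t i j) (Icc a b))
    (hf : ContinuousOn f (Icc a b))
    (hM0 : 0 ≤ M) (hF0 : 0 ≤ F)
    (hM : ∀ t ∈ Icc a b, ∑ i, ∑ j, ‖A t i j‖ ≤ M)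
    (hF : ∀ t ∈ Icc a b, ‖f t‖ ≤ F) :
    ∀ m : ℕ, ∀ c, c ∈ Icc a b → b - c ≤ m * (1 / (2 * (M + 1))) →
      ∀ x₀ : Fin n → ℂ, ∃ x : ℝ → Fin n → ℂ, x c = x₀ ∧
        ∀ t ∈ Icc c b, HasDerivWithinAt x ((A t).mulVec (x t) + f t) (Icc c b) t := by
  set h : ℝ := 1 / (2 * (M + 1)) with hh
  have hh0 : 0 < h := by positivity
  intro m
  induction m with
  | zero =>
    intro c hc hbc x₀
    refine step hab hA hf hM0 hF0 hM hF (Icc_subset_Icc hc.1 le_rfl)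
      (left_mem_Icc.2 hc.2) ?_ x₀
    rw [← hh]
    push_cast at hbc
    linarith
  | succ m ih =>
    intro c hc hbc x₀
    set d : ℝ := min (c + h) b with hd
    have hcd : c ≤ d := le_min (by linarith) hc.2
    have hdb : d ≤ b := min_le_right _ _
    have hdmem : d ∈ Icc a b := ⟨hc.1.trans hcd, hdb⟩
    have hdch : d - c ≤ h := by
      have := min_le_left (c + h) b
      simp only [← hd] at this
      linarith
    obtain ⟨y, hy0, hy⟩ := step hab hA hf hM0 hF0 hM hF
      (Icc_subset_Icc hc.1 hdb) (left_mem_Icc.2 hcd) (by rw [← hh]; exact hdch) x₀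
    have hbd : b - d ≤ m * h := by
      push_cast at hbc
      rcases le_or_gt (c + h) b with h' | h'
      · have hdd : d = c + h := min_eq_left h'
        rw [hdd]
        linarith
      · have hdd : d = b := min_eq_right h'.le
        rw [hdd]
        have : (0:ℝ) ≤ m * h := by positivity
        linarith
    obtain ⟨z, hz0, hz⟩ := ih d hdmem hbd (y d)
    obtain ⟨x, hx1, _, hx⟩ := glue hcd hdb (fun t x => (A t).mulVec x + f t) hy hz hz0.symm
    exact ⟨x, by rw [hx1 c hcd, hy0], hx⟩

lemma extend_left (hab : a ≤ b)
    (hA : ∀ i j, ContinuousOn (fun t => A t i j) (Icc a b))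
    (hf : ContinuousOn f (Icc a b))
    (hM0 : 0 ≤ M) (hF0 : 0 ≤ F)
    (hM : ∀ t ∈ Icc a b, ∑ i, ∑ j, ‖A t i j‖ ≤ M)
    (hF : ∀ t ∈ Icc a b, ‖f t‖ ≤ F) :
    ∀ m : ℕ, ∀ d, d ∈ Icc a b → d - a ≤ m * (1 / (2 * (M + 1))) →
      ∀ x₀ : Fin n → ℂ, ∃ x : ℝ → Fin n → ℂ, x d = x₀ ∧
        ∀ t ∈ Icc a d, HasDerivWithinAt x ((A t).mulVec (x t) + f t) (Icc a d) t := by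
  set h : ℝ := 1 / (2 * (M + 1)) with hh
  have hh0 : 0 < h := by positivity
  intro m
  induction m with
  | zero =>
    intro d hd hda x₀
    refine step hab hA hf hM0 hF0 hM hF (Icc_subset_Icc le_rfl hd.2)
      (right_mem_Icc.2 hd.1) ?_ x₀
    rw [← hh]
    push_cast at hda
    linarith
  | succ m ih =>
    intro d hd hda x₀
    set c : ℝ := max (d - h) a with hc
    have hcd : c ≤ d := max_le (by linarith) hd.1
    have hac : a ≤ c := le_max_right _ _
    have hcmem : c ∈ Icc a b := ⟨hac, hcd.trans hd.2⟩
    have hdch : d - c ≤ h := by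
      have := le_max_left (d - h) a
      simp only [← hc] at this
      linarith
    obtain ⟨y, hy0, hy⟩ := step hab hA hf hM0 hF0 hM hF
      (Icc_subset_Icc hac hd.2) (right_mem_Icc.2 hcd) (by rw [← hh]; exact hdch) x₀
    have hca : c - a ≤ m * h := by
      push_cast at hda
      rcases le_or_gt a (d - h) with h' | h'
      · have hcc : c = d - h := max_eq_left h'
        rw [hcc]
        linarith
      · have hcc : c = a := max_eq_right h'.le
        rw [hcc]
        have : (0:ℝ) ≤ m * h := by positivity
        linarith
    obtain ⟨z, hz0, hz⟩ := ih c hcmem hca (y c)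
    obtain ⟨x, _, hx2, hx⟩ := glue hac hcd (fun t x => (A t).mulVec x + f t) hz hy hz0
    exact ⟨x, by rw [hx2 d hcd, hy0], hx⟩

/-- Existence of a solution to the linear ODE on a compact interval with prescribed
value at any point of the interval. -/
lemma exists_sol_Icc (hab : a ≤ b)
    (hA : ∀ i j, ContinuousOn (fun t => A t i j) (Icc a b))
    (hf : ContinuousOn f (Icc a b))
    {t₁ : ℝ} (ht₁ : t₁ ∈ Icc a b) (x₀ : Fin n → ℂ) :
    ∃ x : ℝ → Fin n → ℂ, x t₁ = x₀ ∧
      ∀ t ∈ Icc a b, HasDerivWithinAt x ((A t).mulVec (x t) + f t) (Icc a b) t := by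
  obtain ⟨tM, htM, hMax'⟩ := IsCompact.exists_isMaxOn isCompact_Icc
    (nonempty_Icc.2 hab) (UlamAux.continuousOn_sumnorm hA)
  obtain ⟨tF, htF, hFax'⟩ := IsCompact.exists_isMaxOn isCompact_Icc
    (nonempty_Icc.2 hab) hf.norm
  have hMax : ∀ t ∈ Icc a b, ∑ i, ∑ j, ‖A t i j‖ ≤ ∑ i, ∑ j, ‖A tM i j‖ := fun t ht => hMax' ht
  have hFax : ∀ t ∈ Icc a b, ‖f t‖ ≤ ‖f tF‖ := fun t ht => hFax' ht
  set M : ℝ := ∑ i, ∑ j, ‖A tM i j‖ with hMdef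
  set F : ℝ := ‖f tF‖ with hFdef
  have hM0 : 0 ≤ M := by positivity
  have hF0 : 0 ≤ F := norm_nonneg _
  set h : ℝ := 1 / (2 * (M + 1)) with hh
  have hh0 : 0 < h := by positivity
  set m : ℕ := ⌈(b - a) / h⌉₊ with hm
  have hlen : b - a ≤ m * h := by
    have h1 : (b - a) / h ≤ (m : ℝ) := Nat.le_ceil _
    calc b - a = ((b - a) / h) * h := by field_simp
      _ ≤ m * h := mul_le_mul_of_nonneg_right h1 hh0.le
  obtain ⟨y, hy0, hy⟩ := extend_left hab hA hf hM0 hF0 hMax hFax m t₁ ht₁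
    (by refine le_trans ?_ hlen; linarith [ht₁.2]) x₀
  obtain ⟨z, hz0, hz⟩ := extend_right hab hA hf hM0 hF0 hMax hFax m t₁ ht₁
    (by refine le_trans ?_ hlen; linarith [ht₁.1]) x₀
  obtain ⟨x, hx1, _, hx⟩ := glue ht₁.1 ht₁.2 (fun t x => (A t).mulVec x + f t) hy hz
    (by rw [hy0, hz0])
  exact ⟨x, by rw [hx1 t₁ le_rfl, hy0], hx⟩

end Extend

section Unique

variable {n : ℕ} {A : ℝ → Matrix (Fin n) (Fin n) ℂ} {f : ℝ → Fin n → ℂ} {a b : ℝ}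

lemma sol_unique (hab : a ≤ b)
    (hA : ∀ i j, ContinuousOn (fun t => A t i j) (Icc a b))
    {t₁ : ℝ} (ht₁ : t₁ ∈ Icc a b) {y z : ℝ → Fin n → ℂ}
    (hy : ∀ t ∈ Icc a b, HasDerivWithinAt y ((A t).mulVec (y t) + f t) (Icc a b) t)
    (hz : ∀ t ∈ Icc a b, HasDerivWithinAt z ((A t).mulVec (z t) + f t) (Icc a b) t)
    (heq : y t₁ = z t₁) : EqOn y z (Icc a b) := by
  obtain ⟨tM, htM, hMax'⟩ := IsCompact.exists_isMaxOn isCompact_Icc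
    (nonempty_Icc.2 hab) (UlamAux.continuousOn_sumnorm hA)
  set M : ℝ := ∑ i, ∑ j, ‖A tM i j‖ with hMdef
  set σ : ℝ → ℝ := fun t => max a (min t b) with hσ
  have hσmem : ∀ t, σ t ∈ Icc a b := fun t =>
    ⟨le_max_left _ _, max_le hab (min_le_right _ _)⟩
  have hσeq : ∀ t ∈ Icc a b, σ t = t := by
    intro t ht
    simp only [hσ, min_eq_left ht.2, max_eq_right ht.1]
  set w : ℝ → (Fin n → ℂ) → (Fin n → ℂ) := fun t x => (A (σ t)).mulVec x + f (σ t) with hw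
  have hv : ∀ t, LipschitzOnWith (Real.toNNReal M) (w t) ((fun _ => (univ : Set (Fin n → ℂ))) t) :=
    fun t => (UlamAux.lipschitz_affine (hMax' (hσmem t))).lipschitzOnWith
  have hcy : ContinuousOn y (Icc a b) := fun t ht => (hy t ht).continuousWithinAt
  have hcz : ContinuousOn z (Icc a b) := fun t ht => (hz t ht).continuousWithinAt
  have key : ∀ (u v : ℝ → Fin n → ℂ),
      (∀ t ∈ Icc a b, HasDerivWithinAt u ((A t).mulVec (u t) + f t) (Icc a b) t) →
      ∀ t ∈ Ico t₁ b, HasDerivWithinAt u (w t (u t)) (Ici t) t := by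
    intro u v hu t ht
    have htab : t ∈ Icc a b := ⟨ht₁.1.trans ht.1, ht.2.le⟩
    have h1 : HasDerivWithinAt u (w t (u t)) (Icc a b) t := by
      rw [hw]
      simp only [hσeq t htab]
      exact hu t htab
    refine (h1.mono (Icc_subset_Icc htab.1 le_rfl)).mono_of_mem_nhdsWithin ?_
    rw [mem_nhdsWithin]
    exact ⟨Iio b, isOpen_Iio, ht.2, fun s hs => ⟨hs.2, hs.1.le⟩⟩
  have keyL : ∀ (u : ℝ → Fin n → ℂ),
      (∀ t ∈ Icc a b, HasDerivWithinAt u ((A t).mulVec (u t) + f t) (Icc a b) t) →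
      ∀ t ∈ Ioc a t₁, HasDerivWithinAt u (w t (u t)) (Iic t) t := by
    intro u hu t ht
    have htab : t ∈ Icc a b := ⟨ht.1.le, ht.2.trans ht₁.2⟩
    have h1 : HasDerivWithinAt u (w t (u t)) (Icc a b) t := by
      rw [hw]
      simp only [hσeq t htab]
      exact hu t htab
    refine (h1.mono (Icc_subset_Icc le_rfl htab.2)).mono_of_mem_nhdsWithin ?_
    rw [mem_nhdsWithin]
    exact ⟨Ioi a, isOpen_Ioi, ht.1, fun s hs => ⟨hs.1.le, hs.2⟩⟩
  have hright : EqOn y z (Icc t₁ b) :=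
    ODE_solution_unique_of_mem_Icc_right (fun t _ => hv t)
      (hcy.mono (Icc_subset_Icc ht₁.1 le_rfl)) (key y z hy) (fun _ _ => mem_univ _)
      (hcz.mono (Icc_subset_Icc ht₁.1 le_rfl)) (key z y hz) (fun _ _ => mem_univ _) heq
  have hleft : EqOn y z (Icc a t₁) :=
    ODE_solution_unique_of_mem_Icc_left (fun t _ => hv t)
      (hcy.mono (Icc_subset_Icc le_rfl ht₁.2)) (keyL y hy) (fun _ _ => mem_univ _)
      (hcz.mono (Icc_subset_Icc le_rfl ht₁.2)) (keyL z hz) (fun _ _ => mem_univ _) heq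
  intro t ht
  rcases le_total t t₁ with h | h
  · exact hleft ⟨ht.1, h⟩
  · exact hright ⟨h, ht.2⟩

end Unique

section Global

variable {n : ℕ} {A : ℝ → Matrix (Fin n) (Fin n) ℂ} {f : ℝ → Fin n → ℂ} {I : Set ℝ}

lemma min_mem_I {s t : ℝ} (hs : s ∈ I) (ht : t ∈ I) : min s t ∈ I := by
  rcases le_total s t with h | h
  · rwa [min_eq_left h]
  · rwa [min_eq_right h]

lemma max_mem_I {s t : ℝ} (hs : s ∈ I) (ht : t ∈ I) : max s t ∈ I := by
  rcases le_total s t with h | h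
  · rwa [max_eq_right h]
  · rwa [max_eq_left h]

/-- A global solution of the linear inhomogeneous ODE on an order-connected set. -/
lemma exists_particular (hI : I.OrdConnected)
    (hA : ∀ i j, ContinuousOn (fun t => A t i j) I)
    (hf : ContinuousOn f I) :
    ∃ xp : ℝ → Fin n → ℂ,
      ∀ t ∈ I, HasDerivWithinAt xp ((A t).mulVec (xp t) + f t) I t := by
  rcases I.eq_empty_or_nonempty with hIe | ⟨t₀, ht₀⟩
  · exact ⟨fun _ => 0, fun t ht => absurd ht (by simp [hIe])⟩
  have hsolIcc : ∀ c d : ℝ, c ∈ I → d ∈ I → c ≤ t₀ → t₀ ≤ d →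
      ∃ y : ℝ → Fin n → ℂ, y t₀ = 0 ∧
        ∀ s ∈ Icc c d, HasDerivWithinAt y ((A s).mulVec (y s) + f s) (Icc c d) s := by
    intro c d hc hd hct htd
    have hsub : Icc c d ⊆ I := hI.out hc hd
    exact exists_sol_Icc (hct.trans htd) (fun i j => (hA i j).mono hsub) (hf.mono hsub)
      ⟨hct, htd⟩ 0
  have hex : ∀ t : ℝ, t ∈ I →
      ∃ y : ℝ → Fin n → ℂ, y t₀ = 0 ∧
        ∀ s ∈ Icc (min t t₀) (max t t₀), HasDerivWithinAt y
          ((A s).mulVec (y s) + f s) (Icc (min t t₀) (max t t₀)) s := by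
    intro t ht
    exact hsolIcc _ _ (min_mem_I ht ht₀) (max_mem_I ht ht₀)
      (min_le_right _ _) (le_max_right _ _)
  choose! Y hY0 hY using hex
  set xp : ℝ → Fin n → ℂ := fun t => Y t t with hxp
  -- any admissible solution agrees with xp on its interval
  have agree : ∀ (p q : ℝ) (y : ℝ → Fin n → ℂ), p ∈ I → q ∈ I → p ≤ t₀ → t₀ ≤ q →
      y t₀ = 0 →
      (∀ s ∈ Icc p q, HasDerivWithinAt y ((A s).mulVec (y s) + f s) (Icc p q) s) →
      ∀ s ∈ Icc p q, y s = xp s := by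
    intro p q y hp hq hpt htq hy0 hysol s hs
    have hsI : s ∈ I := hI.out hp hq hs
    set p' : ℝ := max p (min s t₀) with hp'
    set q' : ℝ := min q (max s t₀) with hq'
    have hp'I : p' ∈ I := max_mem_I hp (min_mem_I hsI ht₀)
    have hq'I : q' ∈ I := min_mem_I hq (max_mem_I hsI ht₀)
    have hsp' : p' ≤ s := max_le hs.1 (min_le_left _ _)
    have hsq' : s ≤ q' := le_min hs.2 (le_max_left _ _)
    have htp' : p' ≤ t₀ := max_le hpt (min_le_right _ _)
    have htq' : t₀ ≤ q' := le_min htq (le_max_right _ _)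
    have hp'q' : p' ≤ q' := htp'.trans htq'
    have hsub1 : Icc p' q' ⊆ Icc p q :=
      Icc_subset_Icc (le_max_left _ _) (min_le_left _ _)
    have hsub2 : Icc p' q' ⊆ Icc (min s t₀) (max s t₀) :=
      Icc_subset_Icc (le_max_right _ _) (min_le_right _ _)
    have hsubI : Icc p' q' ⊆ I := hI.out hp'I hq'I
    have h1 : ∀ u ∈ Icc p' q', HasDerivWithinAt y ((A u).mulVec (y u) + f u) (Icc p' q') u :=
      fun u hu => (hysol u (hsub1 hu)).mono hsub1
    have h2 : ∀ u ∈ Icc p' q', HasDerivWithinAt (Y s) ((A u).mulVec (Y s u) + f u)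
        (Icc p' q') u := fun u hu => (hY s hsI u (hsub2 hu)).mono hsub2
    have := sol_unique hp'q' (fun i j => (hA i j).mono hsubI) ⟨htp', htq'⟩ h1 h2
      (by rw [hy0, hY0 s hsI]) ⟨hsp', hsq'⟩
    rw [this]
  refine ⟨xp, fun t ht => ?_⟩
  -- find a slightly larger interval which is a neighbourhood of t within I
  have hnbhd : ∃ c' ∈ I, ∃ d' ∈ I, c' ≤ min t t₀ ∧ max t t₀ ≤ d' ∧ Icc c' d' ∈ 𝓝[I] t := by
    by_cases hp : ∃ p ∈ I, p < t
    · obtain ⟨p, hpI, hpt⟩ := hp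
      by_cases hq : ∃ q ∈ I, t < q
      · obtain ⟨q, hqI, htq⟩ := hq
        refine ⟨min p t₀, min_mem_I hpI ht₀, max q t₀, max_mem_I hqI ht₀,
          le_min ((min_le_left _ _).trans hpt.le) (min_le_right _ _),
          max_le ((le_max_left _ _).trans' htq.le) (le_max_right _ _), ?_⟩
        rw [mem_nhdsWithin]
        refine ⟨Ioo (min p t₀) (max q t₀), isOpen_Ioo,
          ⟨(min_le_left _ _).trans_lt hpt, htq.trans_le (le_max_left _ _)⟩,
          fun s hs => Ioo_subset_Icc_self hs.1⟩
      · push_neg at hq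
        refine ⟨min p t₀, min_mem_I hpI ht₀, max t t₀, max_mem_I ht ht₀,
          le_min ((min_le_left _ _).trans hpt.le) (min_le_right _ _), le_rfl, ?_⟩
        rw [mem_nhdsWithin]
        refine ⟨Ioo (min p t₀) (t + 1), isOpen_Ioo,
          ⟨(min_le_left _ _).trans_lt hpt, by linarith⟩, fun s hs => ?_⟩
        exact ⟨(hs.1.1).le, (hq s hs.2).trans (le_max_left _ _)⟩
    · push_neg at hp
      by_cases hq : ∃ q ∈ I, t < q
      · obtain ⟨q, hqI, htq⟩ := hq
        refine ⟨min t t₀, min_mem_I ht ht₀, max q t₀, max_mem_I hqI ht₀, le_rfl,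
          max_le ((le_max_left _ _).trans' htq.le) (le_max_right _ _), ?_⟩
        rw [mem_nhdsWithin]
        refine ⟨Ioo (t - 1) (max q t₀), isOpen_Ioo,
          ⟨by linarith, htq.trans_le (le_max_left _ _)⟩, fun s hs => ?_⟩
        exact ⟨(min_le_left _ _).trans (hp s hs.2), (hs.1.2).le⟩
      · push_neg at hq
        refine ⟨min t t₀, min_mem_I ht ht₀, max t t₀, max_mem_I ht ht₀, le_rfl, le_rfl, ?_⟩
        rw [mem_nhdsWithin]
        refine ⟨Ioo (t - 1) (t + 1), isOpen_Ioo, ⟨by linarith, by linarith⟩, fun s hs => ?_⟩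
        exact ⟨(min_le_left _ _).trans (hp s hs.2), (le_max_left _ _).trans' (hq s hs.2)⟩
  obtain ⟨c', hc'I, d', hd'I, hc'm, hd'm, hmem⟩ := hnbhd
  have hct : c' ≤ t₀ := hc'm.trans (min_le_right _ _)
  have htd : t₀ ≤ d' := (le_max_right _ _).trans hd'm
  obtain ⟨y, hy0, hysol⟩ := hsolIcc c' d' hc'I hd'I hct htd
  have hxy : ∀ s ∈ Icc c' d', xp s = y s :=
    fun s hs => (agree c' d' y hc'I hd'I hct htd hy0 hysol s hs).symm
  have htcd : t ∈ Icc c' d' :=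
    ⟨hc'm.trans (min_le_left _ _), (le_max_left _ _).trans hd'm⟩
  have h1 : HasDerivWithinAt xp ((A t).mulVec (xp t) + f t) (Icc c' d') t := by
    rw [hxy t htcd]
    exact (hysol t htcd).congr hxy (hxy t htcd)
  exact h1.mono_of_mem_nhdsWithin hmem

end Global

/-- `N` is a norm on `ℂⁿ`. -/
def IsNormCn (n : ℕ) (N : (Fin n → ℂ) → ℝ) : Prop :=
  (∀ v, 0 ≤ N v) ∧
  (∀ v, N v = 0 ↔ v = 0) ∧
  (∀ (c : ℂ) (v), N (c • v) = ‖c‖ * N v) ∧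
  (∀ v w, N (v + w) ≤ N v + N w)

/-- Ulam stability on `I` with constant `K` (with respect to the norm `N` on `ℂⁿ`)
for the inhomogeneous linear system `x' = A(t) x + f(t)`. -/
def UlamStableCn (n : ℕ) (N : (Fin n → ℂ) → ℝ) (I : Set ℝ)
    (A : ℝ → Matrix (Fin n) (Fin n) ℂ) (f : ℝ → Fin n → ℂ) (K : ℝ) : Prop :=
  0 < K ∧
  ∀ ε : ℝ, 0 < ε →
    ∀ φ φd : ℝ → Fin n → ℂ,
      (∀ t ∈ I, HasDerivWithinAt φ (φd t) I t) →
      ContinuousOn φd I →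
      (∀ t ∈ I, N (φd t - (A t).mulVec (φ t) - f t) ≤ ε) →
      ∃ x : ℝ → Fin n → ℂ,
        (∀ t ∈ I, HasDerivWithinAt x ((A t).mulVec (x t) + f t) I t) ∧
        ∀ t ∈ I, N (φ t - x t) ≤ K * ε

theorem statement0 (n : ℕ) (N : (Fin n → ℂ) → ℝ) (hN : IsNormCn n N)
    (I : Set ℝ) (hI : I.OrdConnected)
    (A : ℝ → Matrix (Fin n) (Fin n) ℂ)
    (hA : ∀ i j, ContinuousOn (fun t => A t i j) I)
    (f : ℝ → Fin n → ℂ) (hf : ContinuousOn f I) (K : ℝ) :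
    UlamStableCn n N I A f K ↔ UlamStableCn n N I A (fun _ => 0) K := by
  obtain ⟨xp, hxp⟩ := exists_particular hI hA hf
  have hxpc : ContinuousOn xp I := fun t ht => (hxp t ht).continuousWithinAt
  have hxpd : ContinuousOn (fun t => (A t).mulVec (xp t) + f t) I :=
    (UlamAux.continuousOn_mulVec hA hxpc).add hf
  constructor
  · rintro ⟨hK, hstab⟩
    refine ⟨hK, ?_⟩
    intro ε hε φ φd hder hcont hbound
    obtain ⟨x, hx, hxK⟩ := hstab ε hε (fun t => φ t + xp t)
      (fun t => φd t + ((A t).mulVec (xp t) + f t))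
      (fun t ht => (hder t ht).add (hxp t ht))
      (hcont.add hxpd)
      (by
        intro t ht
        have hb := hbound t ht
        refine le_trans (le_of_eq (congrArg N ?_)) hb
        simp only [Matrix.mulVec_add, sub_zero]
        abel)
    refine ⟨fun t => x t - xp t, fun t ht => ?_, fun t ht => ?_⟩
    · have h1 := (hx t ht).sub (hxp t ht)
      have e2 : (A t).mulVec (x t - xp t) + (fun _ : ℝ => (0 : Fin n → ℂ)) t
          = ((A t).mulVec (x t) + f t) - ((A t).mulVec (xp t) + f t) := by
        simp only [Matrix.mulVec_sub, add_zero]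
        abel
      rw [e2]
      exact h1
    · have e3 : φ t - (x t - xp t) = (φ t + xp t) - x t := by abel
      rw [e3]
      exact hxK t ht
  · rintro ⟨hK, hstab⟩
    refine ⟨hK, ?_⟩
    intro ε hε φ φd hder hcont hbound
    obtain ⟨x, hx, hxK⟩ := hstab ε hε (fun t => φ t - xp t)
      (fun t => φd t - ((A t).mulVec (xp t) + f t))
      (fun t ht => (hder t ht).sub (hxp t ht))
      (hcont.sub hxpd)
      (by
        intro t ht
        have hb := hbound t ht
        refine le_trans (le_of_eq (congrArg N ?_)) hb
        simp only [Matrix.mulVec_sub, sub_zero]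
        abel)
    refine ⟨fun t => x t + xp t, fun t ht => ?_, fun t ht => ?_⟩
    · have h1 := (hx t ht).add (hxp t ht)
      have e2 : (A t).mulVec (x t + xp t) + f t
          = ((A t).mulVec (x t) + (fun _ : ℝ => (0 : Fin n → ℂ)) t)
            + ((A t).mulVec (xp t) + f t) := by
        simp only [Matrix.mulVec_add, add_zero]
        abel
      rw [e2]
      exact h1
    · have e3 : φ t - (x t + xp t) = (φ t - xp t) - x t := by abel
      rw [e3]
      exact hxK t ht
end
end

section
/- Let −∞ ≤ a < b ≤ ∞ and let I be one of the intervals (a,b), (a,b], [a,b), [a,b]. Let λ₁, λ₂ : I → ℂ be continuous and let A(t) be the diagonal matrix with entries λ₁(t), λ₂(t). Suppose that κ₁₁(t) := ∫_t^b e^{−∫_t^s min{Re λ₁(τ), Re λ₂(τ)} dτ} ds exists (as a finite, possibly improper, integral) for all t ∈ I, and that K₁₁ := sup_{t∈I} κ₁₁(t) < ∞. Then the system x' = A(t)x is Ulam stable on I with Ulam constant K₁₁ (with respect to the maximum norm on ℂ²). Furthermore, if in addition lim_{t→b⁻} ∫_{t₀}^t min{Re λ₁(s), Re λ₂(s)}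 ds = ∞ for t₀ ∈ (a,b), then for every ε > 0 and every continuously differentiable φ : I → ℂ² with sup_{t∈I} ‖φ'(t) − A(t)φ(t)‖∞ ≤ ε, there exists a unique solution x of x' = A(t)x satisfying sup_{t∈I} ‖φ(t) − x(t)‖∞ ≤ K₁₁ε. -/
open MeasureTheory Filter Set

noncomputable section

open Topology

lemma mulVec22 (p q : ℂ) (v : Fin 2 → ℂ) :
    (Matrix.mulVec !![p, 0; 0, q] v) = ![p * v 0, q * v 1] := by
  funext i
  fin_cases i <;> simp [Matrix.mulVec, dotProduct, Fin.sum_univ_succ]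


lemma ftc_within {E : Type*} [NormedAddCommGroup E] [NormedSpace ℝ E] [CompleteSpace E]
    {f : ℝ → E} {I : Set ℝ} (hI : ∀ ⦃x⦄, x ∈ I → ∀ ⦃y⦄, y ∈ I → uIcc x y ⊆ I)
    (hf : ContinuousOn f I) {t₀ t : ℝ} (ht₀ : t₀ ∈ I) (ht : t ∈ I) :
    HasDerivWithinAt (fun u => ∫ τ in t₀..u, f τ) (f t) I t := by
  have hint : ∀ ⦃y⦄, y ∈ I → IntervalIntegrable f volume t₀ y := fun y hy =>
    (hf.mono (hI ht₀ hy)).intervalIntegrable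
  rw [hasDerivWithinAt_iff_isLittleO, Asymptotics.isLittleO_iff]
  intro c hc
  obtain ⟨δ, hδ, hball⟩ := Metric.continuousWithinAt_iff.1 (hf t ht) c hc
  have hmem : Metric.ball t δ ∈ 𝓝[I] t :=
    nhdsWithin_le_nhds (Metric.ball_mem_nhds t hδ)
  filter_upwards [hmem, self_mem_nhdsWithin] with y hyb hyI
  have hsub : uIcc t y ⊆ I := hI ht hyI
  have h1 : (∫ τ in t₀..y, f τ) - ∫ τ in t₀..t, f τ = ∫ τ in t..y, f τ :=
    intervalIntegral.integral_interval_sub_left (hint hyI) (hint ht)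
  have h2 : (∫ τ in t..y, f τ) - (y - t) • f t = ∫ τ in t..y, (f τ - f t) := by
    rw [intervalIntegral.integral_sub ((hf.mono hsub).intervalIntegrable)
      intervalIntegrable_const, intervalIntegral.integral_const]
  have h3 : ‖∫ τ in t..y, (f τ - f t)‖ ≤ c * |y - t| := by
    apply intervalIntegral.norm_integral_le_of_norm_le_const
    intro x hx
    have hxI : x ∈ uIcc t y := uIoc_subset_uIcc hx
    have : dist x t < δ := by
      have := Real.dist_le_of_mem_uIcc hxI left_mem_uIcc
      calc dist x t ≤ dist t y := this
        _ = dist y t := dist_comm t y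
        _ < δ := by simpa [Metric.mem_ball] using hyb
    have := hball (hsub hxI) this
    simpa [dist_eq_norm] using this.le
  calc ‖(∫ τ in t₀..y, f τ) - (∫ τ in t₀..t, f τ) - (y - t) • f t‖
      = ‖∫ τ in t..y, (f τ - f t)‖ := by rw [h1, h2]
    _ ≤ c * |y - t| := h3
    _ = c * ‖y - t‖ := by rw [Real.norm_eq_abs]

lemma deriv_to_cont {E : Type*} [NormedAddCommGroup E] [NormedSpace ℝ E]
    {h : ℝ → E} {h' : ℝ → E} {I : Set ℝ}
    (hd : ∀ x ∈ I, HasDerivWithinAt h (h' x) I x) : ContinuousOn h I :=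
  fun x hx => (hd x hx).continuousWithinAt

lemma ftc2_within {E : Type*} [NormedAddCommGroup E] [NormedSpace ℝ E] [CompleteSpace E]
    {h h' : ℝ → E} {I : Set ℝ} (hI : ∀ ⦃x⦄, x ∈ I → ∀ ⦃y⦄, y ∈ I → uIcc x y ⊆ I)
    (hd : ∀ x ∈ I, HasDerivWithinAt h (h' x) I x) (hc : ContinuousOn h' I)
    {t t' : ℝ} (ht : t ∈ I) (ht' : t' ∈ I) (hle : t ≤ t') :
    ∫ y in t..t', h' y = h t' - h t := by
  have hIcc : Icc t t' ⊆ I := by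
    have := hI ht ht'; rwa [uIcc_of_le hle] at this
  apply intervalIntegral.integral_eq_sub_of_hasDeriv_right_of_le hle
    ((deriv_to_cont hd).mono hIcc)
  · intro x hx
    have hxI : x ∈ I := hIcc (Ioo_subset_Icc_self hx)
    refine (hd x hxI).mono_of_mem_nhdsWithin ?_
    refine mem_of_superset (Ioc_mem_nhdsGT_of_mem ⟨le_refl x, hx.2⟩) ?_
    intro z hz
    exact hIcc ⟨hx.1.le.trans hz.1.le, hz.2⟩
  · have : ContinuousOn h' (uIcc t t') := hc.mono (hI ht ht')
    exact this.intervalIntegrable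

lemma re_intervalIntegral {f : ℝ → ℂ} {a b : ℝ} (hf : IntervalIntegrable f volume a b) :
    (∫ t in a..b, f t).re = ∫ t in a..b, (f t).re := by
  rw [intervalIntegral, intervalIntegral, Complex.sub_re]
  have h1 := integral_re (𝕜 := ℂ) hf.1
  have h2 := integral_re (𝕜 := ℂ) hf.2
  simp only [RCLike.re_to_complex] at h1 h2
  rw [h1, h2]

lemma Jset_open (b : EReal) (t : ℝ) : IsOpen {s : ℝ | t < s ∧ (s : EReal) < b} := by
  have : {s : ℝ | t < s ∧ (s : EReal) < b} = Ioi t ∩ ((↑) ⁻¹' Iio b) := rfl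
  rw [this]
  exact isOpen_Ioi.inter (isOpen_Iio.preimage continuous_coe_real_ereal)

set_option maxHeartbeats 1000000 in
lemma scalar_key (b : EReal) (I : Set ℝ)
    (hIord : ∀ ⦃x⦄, x ∈ I → ∀ ⦃y⦄, y ∈ I → uIcc x y ⊆ I)
    (hIb : ∀ x ∈ I, (x : EReal) ≤ b)
    (hIin : ∀ t ∈ I, ∀ s : ℝ, t < s → (s : EReal) < b → s ∈ I)
    (l : ℝ → ℂ) (hl : ContinuousOn l I)
    (m : ℝ → ℝ) (hm : ContinuousOn m I) (hml : ∀ τ ∈ I, m τ ≤ (l τ).re)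
    (hker : ∀ t ∈ I, IntegrableOn (fun s => Real.exp (-∫ τ in t..s, m τ))
      {s : ℝ | t < s ∧ (s : EReal) < b})
    {t₀ : ℝ} (ht₀ : t₀ ∈ I)
    (ε : ℝ) (hε : 0 ≤ ε)
    (u ud : ℝ → ℂ) (hu : ∀ t ∈ I, HasDerivWithinAt u (ud t) I t)
    (hudc : ContinuousOn ud I)
    (hud : ∀ t ∈ I, ‖ud t - l t * u t‖ ≤ ε) :
    ∃ c : ℂ, ∀ t ∈ I,
      ‖u t - Complex.exp (∫ τ in t₀..t, l τ) * c‖ ≤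
        ε * ∫ s in {s : ℝ | t < s ∧ (s : EReal) < b}, Real.exp (-∫ τ in t..s, m τ) := by
  set L : ℝ → ℂ := fun t => ∫ τ in t₀..t, l τ with hLdef
  set dlt : ℝ → ℂ := fun t => ud t - l t * u t with hdltdef
  set g : ℝ → ℂ := fun s => Complex.exp (-L s) * dlt s with hgdef
  set h : ℝ → ℂ := fun t => Complex.exp (-L t) * u t with hhdef
  set J : ℝ → Set ℝ := fun t => {s : ℝ | t < s ∧ (s : EReal) < b} with hJdef
  have hlint : ∀ ⦃x⦄, x ∈ I → ∀ ⦃y⦄, y ∈ I → IntervalIntegrable l volume x y :=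
    fun x hx y hy => (hl.mono (hIord hx hy)).intervalIntegrable
  have hL : ∀ t ∈ I, HasDerivWithinAt L (l t) I t := fun t ht =>
    ftc_within hIord hl ht₀ ht
  have hLc : ContinuousOn L I := deriv_to_cont hL
  have huc : ContinuousOn u I := deriv_to_cont hu
  have hdltc : ContinuousOn dlt I := hudc.sub (hl.mul huc)
  have hexpc : ContinuousOn (fun t => Complex.exp (-L t)) I :=
    Complex.continuous_exp.comp_continuousOn hLc.neg
  have hgc : ContinuousOn g I := hexpc.mul hdltc
  have hhd : ∀ t ∈ I, HasDerivWithinAt h (g t) I t := by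
    intro t ht
    have e1 : HasDerivWithinAt (fun t => Complex.exp (-L t))
        (Complex.exp (-L t) * (-l t)) I t := (hL t ht).neg.cexp
    have := e1.mul (hu t ht)
    refine this.congr_deriv ?_
    simp only [hhdef, hgdef, hdltdef]
    ring
  have measJ : ∀ t, MeasurableSet (J t) := fun t => (Jset_open b t).measurableSet
  have hJI : ∀ t ∈ I, J t ⊆ I := fun t ht s hs => hIin t ht s hs.1 hs.2
  -- norm of exp
  have hnexp : ∀ z : ℂ, ‖Complex.exp z‖ = Real.exp z.re := fun z => by
    rw [Complex.norm_exp]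
  -- pointwise majorant
  have hbound : ∀ t ∈ I, ∀ s ∈ J t,
      ‖g s‖ ≤ ε * Real.exp (-(L t).re) * Real.exp (-∫ τ in t..s, m τ) := by
    intro t ht s hs
    have hsI : s ∈ I := hJI t ht hs
    have hts : t ≤ s := hs.1.le
    have hIccI : Icc t s ⊆ I := by have := hIord ht hsI; rwa [uIcc_of_le hts] at this
    have hLsub : L s - L t = ∫ τ in t..s, l τ :=
      intervalIntegral.integral_interval_sub_left (hlint ht₀ hsI) (hlint ht₀ ht)
    have hmono : (∫ τ in t..s, m τ) ≤ ∫ τ in t..s, (l τ).re := by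
      apply intervalIntegral.integral_mono_on hts
        ((hm.mono (hIord ht hsI)).intervalIntegrable)
        (((Complex.continuous_re.comp_continuousOn (hl.mono (hIord ht hsI)))).intervalIntegrable)
      exact fun x hx => hml x (hIccI hx)
    have hre : (L s).re = (L t).re + ∫ τ in t..s, (l τ).re := by
      have := re_intervalIntegral (hlint ht hsI)
      have h2 : (L s - L t).re = ∫ τ in t..s, (l τ).re := by rw [hLsub, this]
      rw [Complex.sub_re] at h2; linarith
    have hkey : Real.exp (-(L s).re) ≤ Real.exp (-(L t).re) * Real.exp (-∫ τ in t..s, m τ) := by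
      rw [← Real.exp_add]
      apply Real.exp_le_exp.2
      rw [hre]; linarith
    calc ‖g s‖ = Real.exp (-(L s).re) * ‖dlt s‖ := by
          rw [hgdef]; simp only [norm_mul, hnexp, Complex.neg_re]
      _ ≤ Real.exp (-(L s).re) * ε := by
          apply mul_le_mul_of_nonneg_left (hud s hsI) (Real.exp_nonneg _)
      _ ≤ (Real.exp (-(L t).re) * Real.exp (-∫ τ in t..s, m τ)) * ε := by
          apply mul_le_mul_of_nonneg_right hkey hε
      _ = ε * Real.exp (-(L t).re) * Real.exp (-∫ τ in t..s, m τ) := by ring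
  have hgint : ∀ t ∈ I, IntegrableOn g (J t) := by
    intro t ht
    apply Integrable.mono' ((hker t ht).const_mul (ε * Real.exp (-(L t).re)))
      (((hgc.mono (hJI t ht)).aestronglyMeasurable (measJ t)))
    exact ae_restrict_of_forall_mem (measJ t) (fun s hs => by
      simpa [mul_assoc] using hbound t ht s hs)
  -- constancy
  have hconst : ∀ t ∈ I, ∀ t' ∈ I, t ≤ t' →
      h t + ∫ s in J t, g s = h t' + ∫ s in J t', g s := by
    intro t ht t' ht' hle
    have hIccI : Icc t t' ⊆ I := by have := hIord ht ht'; rwa [uIcc_of_le hle] at this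
    have hIocInt : IntegrableOn g (Ioc t t') :=
      ((hgc.mono hIccI).integrableOn_Icc).mono_set Ioc_subset_Icc_self
    have hdisj : Disjoint (Ioc t t') (J t') := by
      rw [Set.disjoint_left]
      intro s hs hs'
      exact absurd hs'.1 (not_lt.2 hs.2)
    have haeeq : (J t : Set ℝ) =ᵐ[volume] ((Ioc t t' ∪ J t' : Set ℝ)) := by
      apply MeasureTheory.ae_eq_set.2
      refine ⟨measure_mono_null (fun s hs => ?_) (measure_singleton t'),
              measure_mono_null (fun s hs => ?_) (measure_singleton t')⟩
      · obtain ⟨⟨hts, hsb⟩, hnot⟩ := hs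
        exfalso
        rcases le_or_gt s t' with hc | hc
        · exact hnot (Or.inl ⟨hts, hc⟩)
        · exact hnot (Or.inr ⟨hc, hsb⟩)
      · obtain ⟨hmem, hnot⟩ := hs
        rcases hmem with hc | hc
        · have hsb : ¬ (s : EReal) < b := fun hlt => hnot ⟨hc.1, hlt⟩
          have h1 : b ≤ (s : EReal) := not_lt.1 hsb
          have h2 : (s : EReal) ≤ (t' : EReal) := EReal.coe_le_coe_iff.2 hc.2
          have h3 : (t' : EReal) ≤ (s : EReal) := le_trans (hIb t' ht') h1
          have : s = t' := by exact_mod_cast le_antisymm h2 h3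
          exact mem_singleton_iff.2 this
        · exact absurd ⟨lt_of_le_of_lt hle hc.1, hc.2⟩ hnot
    have hsplit : ∫ s in J t, g s = (∫ s in Ioc t t', g s) + ∫ s in J t', g s := by
      rw [setIntegral_congr_set haeeq]
      exact setIntegral_union hdisj (measJ t') hIocInt (hgint t' ht')
    have hftc : ∫ s in Ioc t t', g s = h t' - h t := by
      rw [← intervalIntegral.integral_of_le hle]
      exact ftc2_within hIord hhd hgc ht ht' hle
    rw [hsplit, hftc]; ring
  refine ⟨h t₀ + ∫ s in J t₀, g s, ?_⟩
  intro t ht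
  have hconst' : h t + ∫ s in J t, g s = h t₀ + ∫ s in J t₀, g s := by
    rcases le_total t t₀ with hle | hle
    · exact hconst t ht t₀ ht₀ hle
    · exact (hconst t₀ ht₀ t ht hle).symm
  set c : ℂ := h t₀ + ∫ s in J t₀, g s with hcdef
  have hexp1 : Complex.exp (L t) * Complex.exp (-L t) = 1 := by
    rw [← Complex.exp_add]; simp
  have hid : u t - Complex.exp (L t) * c = -(Complex.exp (L t) * ∫ s in J t, g s) := by
    have h1 : Complex.exp (L t) * h t = u t := by
      rw [hhdef]; dsimp only; rw [← mul_assoc, hexp1, one_mul]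
    have h2 : c = h t + ∫ s in J t, g s := hconst'.symm
    rw [h2, mul_add, h1]; ring
  rw [hid, norm_neg, norm_mul, hnexp]
  have hnint : ‖∫ s in J t, g s‖ ≤
      (ε * Real.exp (-(L t).re)) * ∫ s in J t, Real.exp (-∫ τ in t..s, m τ) := by
    calc ‖∫ s in J t, g s‖ ≤ ∫ s in J t, ‖g s‖ := norm_integral_le_integral_norm g
      _ ≤ ∫ s in J t, (ε * Real.exp (-(L t).re)) * Real.exp (-∫ τ in t..s, m τ) := by
          apply setIntegral_mono_on ((hgint t ht).norm)
            ((hker t ht).const_mul _) (measJ t)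
          exact fun s hs => by simpa [mul_assoc] using hbound t ht s hs
      _ = (ε * Real.exp (-(L t).re)) * ∫ s in J t, Real.exp (-∫ τ in t..s, m τ) :=
          integral_const_mul _ _
  calc Real.exp ((L t).re) * ‖∫ s in J t, g s‖
      ≤ Real.exp ((L t).re) * ((ε * Real.exp (-(L t).re)) *
          ∫ s in J t, Real.exp (-∫ τ in t..s, m τ)) :=
        mul_le_mul_of_nonneg_left hnint (Real.exp_nonneg _)
    _ = ε * ∫ s in J t, Real.exp (-∫ τ in t..s, m τ) := by
        rw [Real.exp_neg]
        field_simp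

lemma sol_key (I : Set ℝ)
    (hIord : ∀ ⦃x⦄, x ∈ I → ∀ ⦃y⦄, y ∈ I → uIcc x y ⊆ I)
    (l : ℝ → ℂ) (hl : ContinuousOn l I) {t₀ : ℝ} (ht₀ : t₀ ∈ I) (c : ℂ) :
    ∀ t ∈ I, HasDerivWithinAt (fun t => Complex.exp (∫ τ in t₀..t, l τ) * c)
      (l t * (Complex.exp (∫ τ in t₀..t, l τ) * c)) I t := by
  intro t ht
  have := ((ftc_within hIord hl ht₀ ht).cexp).mul_const c
  refine this.congr_deriv ?_
  ring

lemma scalar_unique (I : Set ℝ)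
    (hIord : ∀ ⦃x⦄, x ∈ I → ∀ ⦃y⦄, y ∈ I → uIcc x y ⊆ I)
    (l : ℝ → ℂ) (hl : ContinuousOn l I) {t₀ : ℝ} (ht₀ : t₀ ∈ I)
    (v : ℝ → ℂ) (hv : ∀ t ∈ I, HasDerivWithinAt v (l t * v t) I t) :
    ∀ t ∈ I, v t = Complex.exp (∫ τ in t₀..t, l τ) * v t₀ := by
  set L : ℝ → ℂ := fun t => ∫ τ in t₀..t, l τ with hLdef
  set H : ℝ → ℂ := fun t => Complex.exp (-L t) * v t with hHdef
  have hL : ∀ t ∈ I, HasDerivWithinAt L (l t) I t := fun t ht =>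
    ftc_within hIord hl ht₀ ht
  have hHd : ∀ t ∈ I, HasDerivWithinAt H 0 I t := by
    intro t ht
    have e1 : HasDerivWithinAt (fun t => Complex.exp (-L t))
        (Complex.exp (-L t) * (-l t)) I t := (hL t ht).neg.cexp
    have := e1.mul (hv t ht)
    refine this.congr_deriv ?_
    ring
  -- H is constant on I
  have hconst : ∀ t ∈ I, H t = H t₀ := by
    intro t ht
    rcases eq_or_ne t t₀ with rfl | hne
    · rfl
    have key : ∀ p q : ℝ, p ∈ I → q ∈ I → p < q → H q = H p := by
      intro p q hp hq hpq
      have hIcc : Icc p q ⊆ I := by have := hIord hp hq; rwa [uIcc_of_le hpq.le] at this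
      have hdiff : DifferentiableOn ℝ H (Icc p q) := by
        intro x hx
        exact ((hHd x (hIcc hx)).mono hIcc).differentiableWithinAt
      have hderiv : ∀ x ∈ Ico p q, derivWithin H (Icc p q) x = 0 := by
        intro x hx
        have h0 : HasDerivWithinAt H 0 (Icc p q) x := (hHd x (hIcc (Ico_subset_Icc_self hx))).mono hIcc
        exact h0.derivWithin (uniqueDiffOn_Icc hpq x (Ico_subset_Icc_self hx))
      exact constant_of_derivWithin_zero hdiff hderiv q (right_mem_Icc.2 hpq.le)
    rcases lt_or_gt_of_ne hne with hlt | hlt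
    · exact (key t t₀ ht ht₀ hlt).symm
    · exact key t₀ t ht₀ ht hlt
  intro t ht
  have h1 : H t = v t₀ := by
    rw [hconst t ht, hHdef]
    simp [hLdef, intervalIntegral.integral_same]
  have h2 : Complex.exp (L t) * H t = v t := by
    rw [hHdef]; dsimp only; rw [← mul_assoc, ← Complex.exp_add]; simp
  rw [← h2, h1]

lemma ereal_filter (b : EReal) {t₀ : ℝ} (ht₀b : (t₀ : EReal) < b) :
    (Filter.comap (fun x : ℝ => (x : EReal)) (𝓝[Iio b] b)).NeBot ∧
    (∀ᶠ t in Filter.comap (fun x : ℝ => (x : EReal)) (𝓝[Iio b] b),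
      t₀ < t ∧ (t : EReal) < b) := by
  constructor
  · induction b using EReal.rec with
    | bot => exact absurd ht₀b (by simp)
    | coe B =>
        have hcont : Tendsto (fun x : ℝ => (x : EReal)) (𝓝[Iio B] B)
            (𝓝[Iio ((B : ℝ) : EReal)] ((B : ℝ) : EReal)) := by
          apply tendsto_nhdsWithin_of_tendsto_nhds_of_eventually_within
          · exact (continuous_coe_real_ereal.tendsto B).mono_left nhdsWithin_le_nhds
          · filter_upwards [self_mem_nhdsWithin] with x hx
            exact EReal.coe_lt_coe_iff.2 hx
        exact Filter.neBot_of_le (Filter.tendsto_iff_comap.1 hcont)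
    | top =>
        have hcont : Tendsto (fun x : ℝ => (x : EReal)) atTop (𝓝[Iio (⊤ : EReal)] ⊤) := by
          apply tendsto_nhdsWithin_of_tendsto_nhds_of_eventually_within
          · apply EReal.tendsto_nhds_top_iff_real.2
            intro x
            filter_upwards [eventually_gt_atTop x] with y hy
            exact EReal.coe_lt_coe_iff.2 hy
          · exact Eventually.of_forall (fun x => EReal.coe_lt_top x)
        exact Filter.neBot_of_le (Filter.tendsto_iff_comap.1 hcont)
  · have h1 : ∀ᶠ (t : ℝ) in Filter.comap (fun x : ℝ => (x : EReal)) (𝓝[Iio b] b),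
        (t : EReal) < b := preimage_mem_comap self_mem_nhdsWithin
    have h2 : ∀ᶠ (t : ℝ) in Filter.comap (fun x : ℝ => (x : EReal)) (𝓝[Iio b] b),
        (t₀ : EReal) < (t : EReal) :=
      preimage_mem_comap (mem_nhdsWithin_of_mem_nhds (Ioi_mem_nhds ht₀b))
    filter_upwards [h1, h2] with t ht1 ht2
    exact ⟨EReal.coe_lt_coe_iff.1 ht2, ht1⟩

lemma exp_forces_eq (I : Set ℝ) (l : ℝ → ℂ) (m : ℝ → ℝ) {t₀ : ℝ} (F : Filter ℝ)
    (hne : F.NeBot)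
    (hIord : ∀ ⦃x⦄, x ∈ I → ∀ ⦃y⦄, y ∈ I → uIcc x y ⊆ I)
    (hl : ContinuousOn l I) (hm : ContinuousOn m I)
    (hml : ∀ τ ∈ I, m τ ≤ (l τ).re) (ht₀ : t₀ ∈ I)
    (hmem : ∀ᶠ t in F, t ∈ I ∧ t₀ ≤ t)
    (hblow : Tendsto (fun t => ∫ s in t₀..t, m s) F atTop)
    (C : ℝ) (d e : ℂ)
    (hbound : ∀ t ∈ I, ‖Complex.exp (∫ τ in t₀..t, l τ) * (d - e)‖ ≤ C) : d = e := by
  by_contra hde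
  have hpos : 0 < ‖d - e‖ := by
    simpa [sub_eq_zero] using hde
  set R := Real.log ((C + 1) / ‖d - e‖) with hRdef
  have hC : 0 ≤ C := le_trans (norm_nonneg _) (hbound t₀ ht₀)
  have hfrac : 0 < (C + 1) / ‖d - e‖ := by positivity
  have hev := (hblow.eventually_gt_atTop R).and hmem
  obtain ⟨t, hR, htI, ht0t⟩ := hev.exists
  have hsub : uIcc t₀ t ⊆ I := hIord ht₀ htI
  have hre : (∫ s in t₀..t, m s) ≤ (∫ τ in t₀..t, l τ).re := by
    rw [re_intervalIntegral ((hl.mono hsub).intervalIntegrable)]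
    apply intervalIntegral.integral_mono_on ht0t
      ((hm.mono hsub).intervalIntegrable)
      ((Complex.continuous_re.comp_continuousOn (hl.mono hsub)).intervalIntegrable)
    intro x hx
    exact hml x (hsub (by rwa [uIcc_of_le ht0t]))
  have hnorm : ‖Complex.exp (∫ τ in t₀..t, l τ) * (d - e)‖ =
      Real.exp ((∫ τ in t₀..t, l τ).re) * ‖d - e‖ := by
    rw [norm_mul, Complex.norm_exp]
  have hRlt : R < (∫ τ in t₀..t, l τ).re := lt_of_lt_of_le hR hre
  have hkey : C + 1 < Real.exp ((∫ τ in t₀..t, l τ).re) * ‖d - e‖ := by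
    have h1 : Real.exp R * ‖d - e‖ < Real.exp ((∫ τ in t₀..t, l τ).re) * ‖d - e‖ :=
      mul_lt_mul_of_pos_right (Real.exp_lt_exp.2 hRlt) hpos
    have h2 : Real.exp R = (C + 1) / ‖d - e‖ := Real.exp_log hfrac
    rw [h2, div_mul_cancel₀ _ (ne_of_gt hpos)] at h1
    exact h1
  have := hbound t htI
  rw [hnorm] at this
  linarith


def xsol (l1 l2 : ℝ → ℂ) (t₀ : ℝ) (c : Fin 2 → ℂ) : ℝ → Fin 2 → ℂ :=
  fun t => ![Complex.exp (∫ τ in t₀..t, l1 τ) * c 0,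
             Complex.exp (∫ τ in t₀..t, l2 τ) * c 1]

lemma xsol_deriv (I : Set ℝ)
    (hIord : ∀ ⦃x⦄, x ∈ I → ∀ ⦃y⦄, y ∈ I → uIcc x y ⊆ I)
    (l1 l2 : ℝ → ℂ) (hl1 : ContinuousOn l1 I) (hl2 : ContinuousOn l2 I)
    {t₀ : ℝ} (ht₀ : t₀ ∈ I) (c : Fin 2 → ℂ) :
    ∀ t ∈ I, HasDerivWithinAt (xsol l1 l2 t₀ c)
      ((!![l1 t, 0; 0, l2 t]).mulVec (xsol l1 l2 t₀ c t)) I t := by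
  intro t ht
  rw [mulVec22]
  apply hasDerivWithinAt_pi.2
  intro i
  fin_cases i
  · simpa [xsol] using sol_key I hIord l1 hl1 ht₀ (c 0) t ht
  · simpa [xsol] using sol_key I hIord l2 hl2 ht₀ (c 1) t ht

/-- Ulam stability on `I` with constant `K` for the system `x' = A(t) x` on `ℂ²`,
with respect to the maximum norm (the sup norm on `Fin 2 → ℂ`). -/
def UlamStable2C (I : Set ℝ) (A : ℝ → Matrix (Fin 2) (Fin 2) ℂ) (K : ℝ) : Prop :=
  0 < K ∧
  ∀ ε : ℝ, 0 < ε →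
    ∀ φ φd : ℝ → Fin 2 → ℂ,
      (∀ t ∈ I, HasDerivWithinAt φ (φd t) I t) →
      ContinuousOn φd I →
      (∀ t ∈ I, ‖φd t - (A t).mulVec (φ t)‖ ≤ ε) →
      ∃ x : ℝ → Fin 2 → ℂ,
        (∀ t ∈ I, HasDerivWithinAt x ((A t).mulVec (x t)) I t) ∧
        ∀ t ∈ I, ‖φ t - x t‖ ≤ K * ε

/-- `κ₁₁(t) = ∫_t^b exp(-∫_t^s min (Re λ₁) (Re λ₂) dτ) ds`. -/
def kappa11 (b : EReal) (l1 l2 : ℝ → ℂ) (t : ℝ) : ℝ :=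
  ∫ s in {s : ℝ | t < s ∧ (s : EReal) < b},
    Real.exp (-∫ τ in t..s, min ((l1 τ).re) ((l2 τ).re))

theorem statement3 (a b : EReal) (hab : a < b) (I : Set ℝ)
    (hI1 : ∀ x : ℝ, a < (x : EReal) → (x : EReal) < b → x ∈ I)
    (hI2 : ∀ x ∈ I, a ≤ (x : EReal) ∧ (x : EReal) ≤ b)
    (l1 l2 : ℝ → ℂ) (hl1 : ContinuousOn l1 I) (hl2 : ContinuousOn l2 I)
    (hker : ∀ t ∈ I, IntegrableOn
      (fun s => Real.exp (-∫ τ in t..s, min ((l1 τ).re) ((l2 τ).re)))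
      {s : ℝ | t < s ∧ (s : EReal) < b})
    (hbdd : BddAbove (kappa11 b l1 l2 '' I)) :
    UlamStable2C I (fun t => !![l1 t, 0; 0, l2 t]) (sSup (kappa11 b l1 l2 '' I)) ∧
    ((∀ t₀ : ℝ, a < (t₀ : EReal) → (t₀ : EReal) < b →
        Tendsto (fun t => ∫ s in t₀..t, min ((l1 s).re) ((l2 s).re))
          (Filter.comap (fun x : ℝ => (x : EReal)) (nhdsWithin b (Iio b))) atTop) →
      ∀ ε : ℝ, 0 < ε → ∀ φ φd : ℝ → Fin 2 → ℂ,
        (∀ t ∈ I, HasDerivWithinAt φ (φd t) I t) →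
        ContinuousOn φd I →
        (∀ t ∈ I, ‖φd t - (!![l1 t, 0; 0, l2 t]).mulVec (φ t)‖ ≤ ε) →
        ∃ x : ℝ → Fin 2 → ℂ,
          ((∀ t ∈ I, HasDerivWithinAt x ((!![l1 t, 0; 0, l2 t]).mulVec (x t)) I t) ∧
            ∀ t ∈ I, ‖φ t - x t‖ ≤ sSup (kappa11 b l1 l2 '' I) * ε) ∧
          ∀ y : ℝ → Fin 2 → ℂ,
            ((∀ t ∈ I, HasDerivWithinAt y ((!![l1 t, 0; 0, l2 t]).mulVec (y t)) I t) ∧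
              ∀ t ∈ I, ‖φ t - y t‖ ≤ sSup (kappa11 b l1 l2 '' I) * ε) →
            EqOn y x I) := by
  obtain ⟨t₀, hat₀, ht₀b⟩ := EReal.exists_between_coe_real hab
  have ht₀I : t₀ ∈ I := hI1 t₀ hat₀ ht₀b
  have hIa : ∀ x ∈ I, a ≤ (x : EReal) := fun x hx => (hI2 x hx).1
  have hIb : ∀ x ∈ I, (x : EReal) ≤ b := fun x hx => (hI2 x hx).2
  have hIin : ∀ t ∈ I, ∀ s : ℝ, t < s → (s : EReal) < b → s ∈ I := by
    intro t ht s hts hsb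
    exact hI1 s (lt_of_le_of_lt (hIa t ht) (EReal.coe_lt_coe_iff.2 hts)) hsb
  have hIord : ∀ ⦃x⦄, x ∈ I → ∀ ⦃y⦄, y ∈ I → uIcc x y ⊆ I := by
    intro x hx y hy z hz
    rw [uIcc, mem_Icc] at hz
    have hminI : min x y ∈ I := by
      rcases le_total x y with h | h
      · rwa [min_eq_left h]
      · rwa [min_eq_right h]
    have hmaxI : max x y ∈ I := by
      rcases le_total x y with h | h
      · rwa [max_eq_right h]
      · rwa [max_eq_left h]
    rcases lt_or_ge a (z : EReal) with haz | haz
    · rcases lt_or_ge (z : EReal) b with hzb | hzb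
      · exact hI1 z haz hzb
      · have h1 : (z : EReal) ≤ (max x y : EReal) := EReal.coe_le_coe_iff.2 hz.2
        have h2 : (max x y : EReal) ≤ b := hIb _ hmaxI
        have : z = max x y := EReal.coe_eq_coe_iff.1 (le_antisymm h1 (le_trans h2 hzb))
        rwa [this]
    · have h1 : (min x y : EReal) ≤ (z : EReal) := EReal.coe_le_coe_iff.2 hz.1
      have h2 : a ≤ (min x y : EReal) := hIa _ hminI
      have : z = min x y := EReal.coe_eq_coe_iff.1 (le_antisymm (le_trans haz h2) h1)
      rwa [this]
  have hm : ContinuousOn (fun τ => min ((l1 τ).re) ((l2 τ).re)) I :=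
    ContinuousOn.inf (Complex.continuous_re.comp_continuousOn hl1)
      (Complex.continuous_re.comp_continuousOn hl2)
  have hml1 : ∀ τ ∈ I, min ((l1 τ).re) ((l2 τ).re) ≤ (l1 τ).re := fun τ _ => min_le_left _ _
  have hml2 : ∀ τ ∈ I, min ((l1 τ).re) ((l2 τ).re) ≤ (l2 τ).re := fun τ _ => min_le_right _ _
  set K := sSup (kappa11 b l1 l2 '' I) with hKdef
  have hκK : ∀ t ∈ I, kappa11 b l1 l2 t ≤ K := fun t ht => le_csSup hbdd ⟨t, ht, rfl⟩
  have hK0 : 0 < K := by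
    refine lt_of_lt_of_le ?_ (hκK t₀ ht₀I)
    rw [kappa11]
    refine (setIntegral_pos_iff_support_of_nonneg_ae ?_ (hker t₀ ht₀I)).2 ?_
    · exact ae_restrict_of_forall_mem (Jset_open b t₀).measurableSet
        (fun s _ => (Real.exp_pos _).le)
    · have hsupp : Function.support
          (fun s => Real.exp (-∫ τ in t₀..s, min ((l1 τ).re) ((l2 τ).re))) = univ := by
        ext s; simp [Real.exp_ne_zero]
      rw [hsupp, univ_inter]
      apply (Jset_open b t₀).measure_pos volume
      obtain ⟨s, hs1, hs2⟩ := EReal.exists_between_coe_real ht₀b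
      exact ⟨s, EReal.coe_lt_coe_iff.1 hs1, hs2⟩
  have master : ∀ ε : ℝ, 0 < ε → ∀ φ φd : ℝ → Fin 2 → ℂ,
      (∀ t ∈ I, HasDerivWithinAt φ (φd t) I t) → ContinuousOn φd I →
      (∀ t ∈ I, ‖φd t - (!![l1 t, 0; 0, l2 t]).mulVec (φ t)‖ ≤ ε) →
      ∃ c : Fin 2 → ℂ, ∀ t ∈ I, ‖φ t - xsol l1 l2 t₀ c t‖ ≤ K * ε := by
    intro ε hε φ φd hφ hφdc hφb
    have hu0 : ∀ t ∈ I, HasDerivWithinAt (fun t => φ t 0) (φd t 0) I t :=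
      fun t ht => hasDerivWithinAt_pi.1 (hφ t ht) 0
    have hu1 : ∀ t ∈ I, HasDerivWithinAt (fun t => φ t 1) (φd t 1) I t :=
      fun t ht => hasDerivWithinAt_pi.1 (hφ t ht) 1
    have hud0c : ContinuousOn (fun t => φd t 0) I :=
      (continuous_apply (0 : Fin 2)).comp_continuousOn hφdc
    have hud1c : ContinuousOn (fun t => φd t 1) I :=
      (continuous_apply (1 : Fin 2)).comp_continuousOn hφdc
    have hb0 : ∀ t ∈ I, ‖φd t 0 - l1 t * φ t 0‖ ≤ ε := by
      intro t ht
      have h2 : ‖(φd t - (!![l1 t, 0; 0, l2 t]).mulVec (φ t)) 0‖ ≤ ε :=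
        (norm_le_pi_norm _ 0).trans (hφb t ht)
      rw [Pi.sub_apply, mulVec22] at h2
      simpa using h2
    have hb1 : ∀ t ∈ I, ‖φd t 1 - l2 t * φ t 1‖ ≤ ε := by
      intro t ht
      have h2 : ‖(φd t - (!![l1 t, 0; 0, l2 t]).mulVec (φ t)) 1‖ ≤ ε :=
        (norm_le_pi_norm _ 1).trans (hφb t ht)
      rw [Pi.sub_apply, mulVec22] at h2
      simpa using h2
    obtain ⟨c0, hc0⟩ := scalar_key b I hIord hIb hIin l1 hl1
      (fun τ => min ((l1 τ).re) ((l2 τ).re)) hm hml1 hker ht₀I ε hε.le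
      (fun t => φ t 0) (fun t => φd t 0) hu0 hud0c hb0
    obtain ⟨c1, hc1⟩ := scalar_key b I hIord hIb hIin l2 hl2
      (fun τ => min ((l1 τ).re) ((l2 τ).re)) hm hml2 hker ht₀I ε hε.le
      (fun t => φ t 1) (fun t => φd t 1) hu1 hud1c hb1
    refine ⟨![c0, c1], ?_⟩
    intro t ht
    have hκ : kappa11 b l1 l2 t ≤ K := hκK t ht
    have hKε : (0 : ℝ) ≤ K * ε := le_of_lt (mul_pos hK0 hε)
    rw [pi_norm_le_iff_of_nonneg hKε]
    intro i
    have key0 : ‖φ t 0 - Complex.exp (∫ τ in t₀..t, l1 τ) * c0‖ ≤ K * ε := by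
      calc ‖φ t 0 - Complex.exp (∫ τ in t₀..t, l1 τ) * c0‖
          ≤ ε * kappa11 b l1 l2 t := hc0 t ht
        _ ≤ ε * K := mul_le_mul_of_nonneg_left hκ hε.le
        _ = K * ε := mul_comm _ _
    have key1 : ‖φ t 1 - Complex.exp (∫ τ in t₀..t, l2 τ) * c1‖ ≤ K * ε := by
      calc ‖φ t 1 - Complex.exp (∫ τ in t₀..t, l2 τ) * c1‖
          ≤ ε * kappa11 b l1 l2 t := hc1 t ht
        _ ≤ ε * K := mul_le_mul_of_nonneg_left hκ hε.le
        _ = K * ε := mul_comm _ _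
    fin_cases i
    · simpa [xsol] using key0
    · simpa [xsol] using key1
  constructor
  · refine ⟨hK0, ?_⟩
    intro ε hε φ φd hφ hφdc hφb
    obtain ⟨c, hc⟩ := master ε hε φ φd hφ hφdc hφb
    exact ⟨xsol l1 l2 t₀ c, xsol_deriv I hIord l1 l2 hl1 hl2 ht₀I c, hc⟩
  · intro hblow ε hε φ φd hφ hφdc hφb
    obtain ⟨c, hc⟩ := master ε hε φ φd hφ hφdc hφb
    refine ⟨xsol l1 l2 t₀ c, ⟨xsol_deriv I hIord l1 l2 hl1 hl2 ht₀I c, hc⟩, ?_⟩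
    rintro y ⟨hy, hyb⟩
    obtain ⟨hFne, hFev⟩ := ereal_filter b ht₀b
    have hFmem : ∀ᶠ t in Filter.comap (fun x : ℝ => (x : EReal)) (𝓝[Iio b] b),
        t ∈ I ∧ t₀ ≤ t := by
      filter_upwards [hFev] with t ht
      exact ⟨hI1 t (lt_trans hat₀ (EReal.coe_lt_coe_iff.2 ht.1)) ht.2, ht.1.le⟩
    have hblow' := hblow t₀ hat₀ ht₀b
    have hy0 : ∀ t ∈ I, HasDerivWithinAt (fun t => y t 0) (l1 t * y t 0) I t := by
      intro t ht
      have h := hasDerivWithinAt_pi.1 (hy t ht) 0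
      rw [mulVec22] at h
      simpa using h
    have hy1 : ∀ t ∈ I, HasDerivWithinAt (fun t => y t 1) (l2 t * y t 1) I t := by
      intro t ht
      have h := hasDerivWithinAt_pi.1 (hy t ht) 1
      rw [mulVec22] at h
      simpa using h
    have hyrep0 := scalar_unique I hIord l1 hl1 ht₀I _ hy0
    have hyrep1 := scalar_unique I hIord l2 hl2 ht₀I _ hy1
    have hbnd : ∀ (li : ℝ → ℂ) (j : Fin 2),
        (∀ t ∈ I, y t j = Complex.exp (∫ τ in t₀..t, li τ) * y t₀ j) →
        (∀ t ∈ I, xsol l1 l2 t₀ c t j = Complex.exp (∫ τ in t₀..t, li τ) * c j) →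
        ∀ t ∈ I, ‖Complex.exp (∫ τ in t₀..t, li τ) * (y t₀ j - c j)‖ ≤ 2 * (K * ε) := by
      intro li j hyr hxr t ht
      have h1 : Complex.exp (∫ τ in t₀..t, li τ) * (y t₀ j - c j)
          = (y t j - φ t j) + (φ t j - xsol l1 l2 t₀ c t j) := by
        rw [hyr t ht, hxr t ht]; ring
      rw [h1]
      calc ‖(y t j - φ t j) + (φ t j - xsol l1 l2 t₀ c t j)‖
          ≤ ‖y t j - φ t j‖ + ‖φ t j - xsol l1 l2 t₀ c t j‖ := norm_add_le _ _
        _ ≤ ‖φ t - y t‖ + ‖φ t - xsol l1 l2 t₀ c t‖ := by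
            apply add_le_add
            · rw [norm_sub_rev]
              exact norm_le_pi_norm (φ t - y t) j
            · exact norm_le_pi_norm (φ t - xsol l1 l2 t₀ c t) j
        _ ≤ K * ε + K * ε := add_le_add (hyb t ht) (hc t ht)
        _ = 2 * (K * ε) := by ring
    have hd0 : y t₀ 0 = c 0 := by
      apply exp_forces_eq I l1 (fun τ => min ((l1 τ).re) ((l2 τ).re)) _ hFne hIord hl1 hm
        hml1 ht₀I hFmem hblow' (2 * (K * ε))
      exact hbnd l1 0 hyrep0 (fun t _ => by simp [xsol])
    have hd1 : y t₀ 1 = c 1 := by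
      apply exp_forces_eq I l2 (fun τ => min ((l1 τ).re) ((l2 τ).re)) _ hFne hIord hl2 hm
        hml2 ht₀I hFmem hblow' (2 * (K * ε))
      exact hbnd l2 1 hyrep1 (fun t _ => by simp [xsol])
    intro t ht
    funext i
    fin_cases i
    · have := hyrep0 t ht
      rw [hd0] at this
      simpa [xsol] using this
    · have := hyrep1 t ht
      rw [hd1] at this
      simpa [xsol] using this
end
end

section
/- Let −∞ ≤ a < b ≤ ∞ and let I be one of the intervals (a,b), (a,b], [a,b), [a,b]. Let λ₁, λ₂ : I → ℂ be continuous and let A(t) be the diagonal matrix with entries λ₁(t), λ₂(t). Suppose that κ₁₂(t) := ∫_a^t e^{∫_s^t max{Re λ₁(τ), Re λ₂(τ)} dτ} ds exists (as a finite, possibly improper, integral) for all t ∈ I, and that K₁₂ := sup_{t∈I} κ₁₂(t) < ∞. Then the system x' = A(t)x is Ulam stable on I with Ulam constant K₁₂ (with respect to the maximum norm on ℂ²). Furthermore, if in addition lim_{t→a⁺} ∫_t^{t₀} min{−Re λ₁(s), −Re λ₂(s)} ds = ∞ for t₀ ∈ (a,b), then for every ε > 0 and every continuously differentiable φ : I →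 ℂ² with sup_{t∈I} ‖φ'(t) − A(t)φ(t)‖∞ ≤ ε, there exists a unique solution x of x' = A(t)x satisfying sup_{t∈I} ‖φ(t) − x(t)‖∞ ≤ K₁₂ε. -/
open MeasureTheory Filter Set

noncomputable section

/-- `κ₁₂(t) = ∫_a^t exp(∫_s^t max (Re λ₁) (Re λ₂) dτ) ds`. -/
def kappa12 (a : EReal) (l1 l2 : ℝ → ℂ) (t : ℝ) : ℝ :=
  ∫ s in {s : ℝ | a < (s : EReal) ∧ s < t},
    Real.exp (∫ τ in s..t, max ((l1 τ).re) ((l2 τ).re))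

open intervalIntegral

lemma hasDerivWithinAt_primitive' {I : Set ℝ} (hconv : Convex ℝ I)
    {E : Type*} [NormedAddCommGroup E] [NormedSpace ℝ E] [CompleteSpace E]
    {l : ℝ → E} (hl : ContinuousOn l I) {t₀ t : ℝ} (ht₀ : t₀ ∈ I) (ht : t ∈ I) :
    HasDerivWithinAt (fun u => ∫ τ in t₀..u, l τ) (l t) I t := by
  have hoc : OrdConnected I := hconv.ordConnected
  have hint : IntervalIntegrable l volume t₀ t :=
    (hl.mono (hoc.uIcc_subset ht₀ ht)).intervalIntegrable
  have left : HasDerivWithinAt (fun u => ∫ τ in t₀..u, l τ) (l t) (I ∩ Iic t) t := by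
    by_cases hc : ∃ c ∈ I, c < t
    · obtain ⟨c, hcI, hct⟩ := hc
      have hIcc : Icc c t ⊆ I := hoc.out hcI ht
      haveI : Fact (t ∈ Icc c t) := ⟨⟨hct.le, le_refl t⟩⟩
      have h := integral_hasDerivWithinAt_right (s := Icc c t) (t := Icc c t) hint
        ((hl.mono hIcc).stronglyMeasurableAtFilter_nhdsWithin measurableSet_Icc t)
        ((hl.mono hIcc) t ⟨hct.le, le_refl t⟩)
      exact h.mono_of_mem_nhdsWithin (mem_nhdsWithin.2
        ⟨Ioi c, isOpen_Ioi, hct, fun x hx => ⟨hx.1.le, hx.2.2⟩⟩)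
    · push_neg at hc
      have hsub : I ∩ Iic t ⊆ {t} := fun x hx => le_antisymm hx.2 (hc x hx.1)
      exact HasFDerivWithinAt.of_not_accPt
        (by rw [accPt_principal_iff_nhdsWithin, not_neBot, Set.diff_eq_empty.2 hsub, nhdsWithin_empty])
  have right : HasDerivWithinAt (fun u => ∫ τ in t₀..u, l τ) (l t) (I ∩ Ici t) t := by
    by_cases hc : ∃ c ∈ I, t < c
    · obtain ⟨c, hcI, hct⟩ := hc
      have hIcc : Icc t c ⊆ I := hoc.out ht hcI
      haveI : Fact (t ∈ Icc t c) := ⟨⟨le_refl t, hct.le⟩⟩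
      have h := integral_hasDerivWithinAt_right (s := Icc t c) (t := Icc t c) hint
        ((hl.mono hIcc).stronglyMeasurableAtFilter_nhdsWithin measurableSet_Icc t)
        ((hl.mono hIcc) t ⟨le_refl t, hct.le⟩)
      exact h.mono_of_mem_nhdsWithin (mem_nhdsWithin.2
        ⟨Iio c, isOpen_Iio, hct, fun x hx => ⟨hx.2.2, hx.1.le⟩⟩)
    · push_neg at hc
      have hsub : I ∩ Ici t ⊆ {t} := fun x hx => le_antisymm (hc x hx.1) hx.2
      exact HasFDerivWithinAt.of_not_accPt
        (by rw [accPt_principal_iff_nhdsWithin, not_neBot, Set.diff_eq_empty.2 hsub, nhdsWithin_empty])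
  exact (left.union right).mono fun x hx => by
    rcases le_total x t with h | h
    · exact Or.inl ⟨hx, h⟩
    · exact Or.inr ⟨hx, h⟩

lemma scalar_core (a : EReal) {I : Set ℝ} (hconv : Convex ℝ I)
    {t₀ : ℝ} (ht₀ : t₀ ∈ I) (ht₀a : a < (t₀ : EReal))
    (haI : ∀ t ∈ I, a ≤ (t : EReal))
    (hJI : ∀ t ∈ I, {s : ℝ | a < (s : EReal) ∧ s < t} ⊆ I)
    {l : ℝ → ℂ} {L : ℝ → ℝ} (hl : ContinuousOn l I) (hL : ContinuousOn L I)
    (hlL : ∀ τ ∈ I, (l τ).re ≤ L τ)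
    (hker : ∀ t ∈ I, IntegrableOn (fun s => Real.exp (∫ τ in s..t, L τ))
      {s : ℝ | a < (s : EReal) ∧ s < t})
    {ε : ℝ} {φ ψ : ℝ → ℂ}
    (hφ : ∀ t ∈ I, HasDerivWithinAt φ (ψ t) I t)
    (hψ : ContinuousOn ψ I)
    (hb : ∀ t ∈ I, ‖ψ t - l t * φ t‖ ≤ ε) :
    ∃ c : ℂ, ∀ t ∈ I, ‖φ t - c * Complex.exp (∫ τ in t₀..t, l τ)‖ ≤
        ε * ∫ s in {s : ℝ | a < (s : EReal) ∧ s < t}, Real.exp (∫ τ in s..t, L τ) := by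
  have hoc : OrdConnected I := hconv.ordConnected
  set J : ℝ → Set ℝ := fun t => {s : ℝ | a < (s : EReal) ∧ s < t} with hJ
  have hJmeas : ∀ t, MeasurableSet (J t) := by
    intro t
    have : J t = ((↑) : ℝ → EReal) ⁻¹' (Ioi a) ∩ Iio t := rfl
    rw [this]
    exact ((isOpen_Ioi.preimage continuous_coe_real_ereal).inter isOpen_Iio).measurableSet
  set Λ : ℝ → ℂ := fun u => ∫ τ in t₀..u, l τ with hΛdef
  have hΛ : ∀ t ∈ I, HasDerivWithinAt Λ (l t) I t := fun t ht =>
    hasDerivWithinAt_primitive' hconv hl ht₀ ht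
  have hΛc : ContinuousOn Λ I := fun t ht => (hΛ t ht).continuousWithinAt
  have hφc : ContinuousOn φ I := fun t ht => (hφ t ht).continuousWithinAt
  set R : ℝ → ℝ := fun u => ∫ τ in t₀..u, (l τ).re with hRdef
  have hll : ∀ s ∈ I, ∀ t ∈ I, IntervalIntegrable l volume s t := fun s hs t ht =>
    (hl.mono (hoc.uIcc_subset hs ht)).intervalIntegrable
  have hlre : ContinuousOn (fun τ => (l τ).re) I := Complex.continuous_re.comp_continuousOn hl
  have hllre : ∀ s ∈ I, ∀ t ∈ I, IntervalIntegrable (fun τ => (l τ).re) volume s t :=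
    fun s hs t ht => (hlre.mono (hoc.uIcc_subset hs ht)).intervalIntegrable
  have hRe : ∀ t ∈ I, (Λ t).re = R t := by
    intro t ht
    have := Complex.reCLM.intervalIntegral_comp_comm (hll t₀ ht₀ t ht)
    simpa [hΛdef, hRdef] using this.symm
  have hRsub : ∀ s ∈ I, ∀ t ∈ I, s ≤ t → R t - R s ≤ ∫ τ in s..t, L τ := by
    intro s hs t ht hst
    have hIcc : Icc s t ⊆ I := hoc.out hs ht
    have h1 : R t - R s = ∫ τ in s..t, (l τ).re :=
      integral_interval_sub_left (hllre t₀ ht₀ t ht) (hllre t₀ ht₀ s hs)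
    rw [h1]
    exact intervalIntegral.integral_mono_on hst
      ((hlre.mono (hoc.uIcc_subset hs ht)).intervalIntegrable.mono_set
        (by rw [uIcc_of_le hst]))
      ((hL.mono (hoc.uIcc_subset hs ht)).intervalIntegrable)
      (fun x hx => hlL x (hIcc hx))
  set g : ℝ → ℂ := fun s => (ψ s - l s * φ s) * Complex.exp (-Λ s) with hgdef
  have hgc : ContinuousOn g I := (hψ.sub (hl.mul hφc)).mul (hΛc.neg.cexp)
  have hu : ∀ t ∈ I, HasDerivWithinAt (fun s => φ s * Complex.exp (-Λ s)) (g t) I t := by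
    intro t ht
    have h := (hφ t ht).mul ((hΛ t ht).neg.cexp)
    refine h.congr_deriv ?_
    simp only [hgdef, Pi.neg_apply]; ring
  have hε : 0 ≤ ε := le_trans (norm_nonneg _) (hb t₀ ht₀)
  have hgbound : ∀ t ∈ I, ∀ s ∈ J t,
      ‖g s‖ ≤ ε * Real.exp (-(R t)) * Real.exp (∫ τ in s..t, L τ) := by
    intro t ht s hs
    have hsI : s ∈ I := hJI t ht hs
    have h1 : ‖g s‖ = ‖ψ s - l s * φ s‖ * Real.exp (-(R s)) := by
      rw [hgdef]
      simp only [norm_mul, Complex.norm_exp, Complex.neg_re]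
      rw [hRe s hsI]
    have h2 : Real.exp (-(R s)) ≤ Real.exp (∫ τ in s..t, L τ) * Real.exp (-(R t)) := by
      rw [← Real.exp_add, Real.exp_le_exp]
      have := hRsub s hsI t ht hs.2.le
      linarith
    calc ‖g s‖ = ‖ψ s - l s * φ s‖ * Real.exp (-(R s)) := h1
      _ ≤ ε * Real.exp (-(R s)) :=
          mul_le_mul_of_nonneg_right (hb s hsI) (Real.exp_nonneg _)
      _ ≤ ε * (Real.exp (∫ τ in s..t, L τ) * Real.exp (-(R t))) :=
          mul_le_mul_of_nonneg_left h2 hε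
      _ = ε * Real.exp (-(R t)) * Real.exp (∫ τ in s..t, L τ) := by ring
  have hgint : ∀ t ∈ I, IntegrableOn g (J t) := by
    intro t ht
    have hdom : IntegrableOn (fun s => ε * Real.exp (-(R t)) * Real.exp (∫ τ in s..t, L τ))
        (J t) := (hker t ht).const_mul _
    refine Integrable.mono' hdom
      ((hgc.mono (hJI t ht)).aestronglyMeasurable (hJmeas t)) ?_
    exact (ae_restrict_iff' (hJmeas t)).2 (ae_of_all _ (fun s hs => hgbound t ht s hs))
  have hftc : ∀ s ∈ I, ∀ t ∈ I, s ≤ t →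
      (∫ x in s..t, g x) = φ t * Complex.exp (-Λ t) - φ s * Complex.exp (-Λ s) := by
    intro s hs t ht hst
    have hIcc : Icc s t ⊆ I := hoc.out hs ht
    refine intervalIntegral.integral_eq_sub_of_hasDeriv_right_of_le hst
      ((hφc.mul (hΛc.neg.cexp)).mono hIcc) ?_
      ((hgc.mono (hoc.uIcc_subset hs ht)).intervalIntegrable)
    intro x hx
    refine (hu x (hIcc (Ioo_subset_Icc_self hx))).mono_of_mem_nhdsWithin
      (mem_nhdsWithin.2 ⟨Iio t, isOpen_Iio, hx.2, fun y hy => hIcc ⟨(hx.1.trans hy.2).le, hy.1.le⟩⟩)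
  set c : ℂ := φ t₀ * Complex.exp (-Λ t₀) - ∫ s in J t₀, g s with hcdef
  have hkey : ∀ t ∈ I, φ t * Complex.exp (-Λ t) - c = ∫ s in J t, g s := by
    intro t ht
    rcases le_total t₀ t with hle | hle
    · have hsplit : J t = J t₀ ∪ Ico t₀ t := by
        ext s
        simp only [hJ, mem_setOf_eq, mem_union, mem_Ico]
        constructor
        · rintro ⟨h1, h2⟩
          rcases lt_or_ge s t₀ with h | h
          · exact Or.inl ⟨h1, h⟩
          · exact Or.inr ⟨h, h2⟩
        · rintro (⟨h1, h2⟩ | ⟨h1, h2⟩)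
          · exact ⟨h1, h2.trans_le hle⟩
          · exact ⟨lt_of_lt_of_le ht₀a (EReal.coe_le_coe_iff.2 h1), h2⟩
      have hdisj : Disjoint (J t₀) (Ico t₀ t) := by
        rw [Set.disjoint_left]
        rintro s ⟨_, h2⟩ ⟨h3, _⟩
        exact absurd h3 (not_le.2 h2)
      have e1 : ∫ s in J t, g s = (∫ s in J t₀, g s) + ∫ s in Ico t₀ t, g s := by
        rw [hsplit]
        exact setIntegral_union hdisj measurableSet_Ico
          ((hgint t ht).mono_set (by rw [hsplit]; exact subset_union_left))
          ((hgint t ht).mono_set (by rw [hsplit]; exact subset_union_right))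
      have e2 : (∫ s in Ico t₀ t, g s) = ∫ x in t₀..t, g x := by
        rw [intervalIntegral.integral_of_le hle, integral_Ico_eq_integral_Ioo,
          integral_Ioc_eq_integral_Ioo]
      rw [e1, e2, hftc t₀ ht₀ t ht hle, hcdef]
      ring
    · have hsplit : J t₀ = J t ∪ (Ico t t₀ ∩ {s : ℝ | a < (s : EReal)}) := by
        ext s
        simp only [hJ, mem_setOf_eq, mem_union, mem_inter_iff, mem_Ico]
        constructor
        · rintro ⟨h1, h2⟩
          rcases lt_or_ge s t with h | h
          · exact Or.inl ⟨h1, h⟩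
          · exact Or.inr ⟨⟨h, h2⟩, h1⟩
        · rintro (⟨h1, h2⟩ | ⟨⟨h1, h2⟩, h3⟩)
          · exact ⟨h1, h2.trans_le hle⟩
          · exact ⟨h3, h2⟩
      have hdisj : Disjoint (J t) (Ico t t₀ ∩ {s : ℝ | a < (s : EReal)}) := by
        rw [Set.disjoint_left]
        rintro s ⟨_, h2⟩ ⟨⟨h3, _⟩, _⟩
        exact absurd h3 (not_le.2 h2)
      have hmeas2 : MeasurableSet (Ico t t₀ ∩ {s : ℝ | a < (s : EReal)}) :=
        measurableSet_Ico.inter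
          (isOpen_Ioi.preimage continuous_coe_real_ereal).measurableSet
      have e1 : ∫ s in J t₀, g s
          = (∫ s in J t, g s) + ∫ s in Ico t t₀ ∩ {s : ℝ | a < (s : EReal)}, g s := by
        rw [hsplit]
        exact setIntegral_union hdisj hmeas2
          ((hgint t₀ ht₀).mono_set (by rw [hsplit]; exact subset_union_left))
          ((hgint t₀ ht₀).mono_set (by rw [hsplit]; exact subset_union_right))
      have hae : (Ico t t₀ ∩ {s : ℝ | a < (s : EReal)} : Set ℝ) =ᵐ[volume] Ioo t t₀ := by
        rw [MeasureTheory.ae_eq_set]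
        constructor
        · refine measure_mono_null (fun s hs => ?_) (measure_singleton t)
          obtain ⟨⟨⟨h1, h2⟩, _⟩, h4⟩ := hs
          simp only [mem_Ioo, not_and] at h4
          have : ¬ t < s := fun h => h4 h h2
          exact le_antisymm (not_lt.1 this) h1
        · refine measure_mono_null (fun s hs => ?_) (measure_empty (μ := volume))
          obtain ⟨⟨h1, h2⟩, h3⟩ := hs
          exact absurd ⟨⟨h1.le, h2⟩, lt_of_le_of_lt (haI t ht) (EReal.coe_lt_coe_iff.2 h1)⟩ h3
      have e2 : (∫ s in Ico t t₀ ∩ {s : ℝ | a < (s : EReal)}, g s) = ∫ x in t..t₀, g x := by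
        rw [setIntegral_congr_set hae, intervalIntegral.integral_of_le hle,
          integral_Ioc_eq_integral_Ioo]
      have e3 := hftc t ht t₀ ht₀ hle
      rw [e2, e3] at e1
      rw [hcdef]
      linear_combination e1
  refine ⟨c, fun t ht => ?_⟩
  have hee : Complex.exp (-Λ t) * Complex.exp (Λ t) = 1 := by
    rw [← Complex.exp_add, neg_add_cancel, Complex.exp_zero]
  have h0 : φ t - c * Complex.exp (Λ t) = (φ t * Complex.exp (-Λ t) - c) * Complex.exp (Λ t) := by
    linear_combination (-(φ t)) * hee
  have hnorm1 : ‖φ t - c * Complex.exp (Λ t)‖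
      = ‖φ t * Complex.exp (-Λ t) - c‖ * Real.exp (R t) := by
    rw [h0, norm_mul]
    simp only [Complex.norm_exp]
    rw [hRe t ht]
  have hbound : ‖φ t * Complex.exp (-Λ t) - c‖
      ≤ ε * Real.exp (-(R t)) * ∫ s in J t, Real.exp (∫ τ in s..t, L τ) := by
    rw [hkey t ht]
    calc ‖∫ s in J t, g s‖
        ≤ ∫ s in J t, ε * Real.exp (-(R t)) * Real.exp (∫ τ in s..t, L τ) :=
          norm_integral_le_of_norm_le ((hker t ht).const_mul _)
            ((ae_restrict_iff' (hJmeas t)).2 (ae_of_all _ (fun s hs => hgbound t ht s hs)))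
      _ = ε * Real.exp (-(R t)) * ∫ s in J t, Real.exp (∫ τ in s..t, L τ) := by
          rw [MeasureTheory.integral_const_mul]
  calc ‖φ t - c * Complex.exp (Λ t)‖
      = ‖φ t * Complex.exp (-Λ t) - c‖ * Real.exp (R t) := hnorm1
    _ ≤ ε * Real.exp (-(R t)) * (∫ s in J t, Real.exp (∫ τ in s..t, L τ)) * Real.exp (R t) :=
        mul_le_mul_of_nonneg_right hbound (Real.exp_nonneg _)
    _ = ε * (Real.exp (-(R t)) * Real.exp (R t)) * (∫ s in J t, Real.exp (∫ τ in s..t, L τ)) := by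
        ring
    _ = ε * ∫ s in J t, Real.exp (∫ τ in s..t, L τ) := by
        rw [← Real.exp_add, neg_add_cancel, Real.exp_zero, mul_one]

lemma scalar_sol {I : Set ℝ} (hconv : Convex ℝ I)
    {l : ℝ → ℂ}
    {t₀ : ℝ} (ht₀ : t₀ ∈ I) {z : ℝ → ℂ}
    (hz : ∀ t ∈ I, HasDerivWithinAt z (l t * z t) I t)
    (hprim : ∀ t ∈ I, HasDerivWithinAt (fun u => ∫ τ in t₀..u, l τ) (l t) I t) :
    ∀ t ∈ I, z t = z t₀ * Complex.exp (∫ τ in t₀..t, l τ) := by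
  intro t ht
  set Λ : ℝ → ℂ := fun u => ∫ τ in t₀..u, l τ with hΛdef
  have hw : ∀ s ∈ I, HasDerivWithinAt (fun s => z s * Complex.exp (-Λ s)) 0 I s := by
    intro s hs
    have h := (hz s hs).mul (((hprim s hs).neg).cexp)
    refine h.congr_deriv ?_
    ring
  have hle := hconv.norm_image_sub_le_of_norm_hasDerivWithin_le (C := 0) hw
    (fun s _ => by simp) ht₀ ht
  have heq : z t * Complex.exp (-Λ t) = z t₀ * Complex.exp (-Λ t₀) := by
    rw [← sub_eq_zero, ← norm_le_zero_iff]
    simpa using hle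
  have hΛ0 : Λ t₀ = 0 := intervalIntegral.integral_same
  rw [hΛ0, neg_zero, Complex.exp_zero, mul_one] at heq
  have hee : Complex.exp (-Λ t) * Complex.exp (Λ t) = 1 := by
    rw [← Complex.exp_add, neg_add_cancel, Complex.exp_zero]
  calc z t = z t * (Complex.exp (-Λ t) * Complex.exp (Λ t)) := by rw [hee, mul_one]
    _ = z t * Complex.exp (-Λ t) * Complex.exp (Λ t) := by ring
    _ = z t₀ * Complex.exp (Λ t) := by rw [heq]
theorem statement4 (a b : EReal) (hab : a < b) (I : Set ℝ)
    (hI1 : ∀ x : ℝ, a < (x : EReal) → (x : EReal) < b → x ∈ I)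
    (hI2 : ∀ x ∈ I, a ≤ (x : EReal) ∧ (x : EReal) ≤ b)
    (l1 l2 : ℝ → ℂ) (hl1 : ContinuousOn l1 I) (hl2 : ContinuousOn l2 I)
    (hker : ∀ t ∈ I, IntegrableOn
      (fun s => Real.exp (∫ τ in s..t, max ((l1 τ).re) ((l2 τ).re)))
      {s : ℝ | a < (s : EReal) ∧ s < t})
    (hbdd : BddAbove (kappa12 a l1 l2 '' I)) :
    UlamStable2C I (fun t => !![l1 t, 0; 0, l2 t]) (sSup (kappa12 a l1 l2 '' I)) ∧
    ((∀ t₀ : ℝ, a < (t₀ : EReal) → (t₀ : EReal) < b →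
        Tendsto (fun t => ∫ s in t..t₀, min (-(l1 s).re) (-(l2 s).re))
          (Filter.comap (fun x : ℝ => (x : EReal)) (nhdsWithin a (Ioi a))) atTop) →
      ∀ ε : ℝ, 0 < ε → ∀ φ φd : ℝ → Fin 2 → ℂ,
        (∀ t ∈ I, HasDerivWithinAt φ (φd t) I t) →
        ContinuousOn φd I →
        (∀ t ∈ I, ‖φd t - (!![l1 t, 0; 0, l2 t]).mulVec (φ t)‖ ≤ ε) →
        ∃ x : ℝ → Fin 2 → ℂ,
          ((∀ t ∈ I, HasDerivWithinAt x ((!![l1 t, 0; 0, l2 t]).mulVec (x t)) I t) ∧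
            ∀ t ∈ I, ‖φ t - x t‖ ≤ sSup (kappa12 a l1 l2 '' I) * ε) ∧
          ∀ y : ℝ → Fin 2 → ℂ,
            ((∀ t ∈ I, HasDerivWithinAt y ((!![l1 t, 0; 0, l2 t]).mulVec (y t)) I t) ∧
              ∀ t ∈ I, ‖φ t - y t‖ ≤ sSup (kappa12 a l1 l2 '' I) * ε) →
            EqOn y x I) := by
  obtain ⟨t₀, ht₀a, ht₀b⟩ := EReal.exists_between_coe_real hab
  have ht₀I : t₀ ∈ I := hI1 t₀ ht₀a ht₀b
  have hoc : OrdConnected I := by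
    constructor
    intro x hx y hy z hz
    rcases eq_or_lt_of_le hz.1 with h | h
    · rwa [← h]
    rcases eq_or_lt_of_le hz.2 with h2 | h2
    · rwa [h2]
    exact hI1 z (lt_of_le_of_lt (hI2 x hx).1 (EReal.coe_lt_coe_iff.2 h))
      (lt_of_lt_of_le (EReal.coe_lt_coe_iff.2 h2) (hI2 y hy).2)
  have hconv : Convex ℝ I := hoc.convex
  have hJI : ∀ t ∈ I, {s : ℝ | a < (s : EReal) ∧ s < t} ⊆ I := fun t ht s hs =>
    hI1 s hs.1 (lt_of_lt_of_le (EReal.coe_lt_coe_iff.2 hs.2) (hI2 t ht).2)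
  have haI : ∀ t ∈ I, a ≤ (t : EReal) := fun t ht => (hI2 t ht).1
  have hLre1 : ContinuousOn (fun τ => (l1 τ).re) I := Complex.continuous_re.comp_continuousOn hl1
  have hLre2 : ContinuousOn (fun τ => (l2 τ).re) I := Complex.continuous_re.comp_continuousOn hl2
  have hL : ContinuousOn (fun τ => max (l1 τ).re (l2 τ).re) I :=
    hLre1.sup hLre2
  have hκle : ∀ t ∈ I, kappa12 a l1 l2 t ≤ sSup (kappa12 a l1 l2 '' I) := fun t ht =>
    le_csSup hbdd ⟨t, ht, rfl⟩
  set K := sSup (kappa12 a l1 l2 '' I) with hKdef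
  have hKpos : 0 < K := by
    refine lt_of_lt_of_le ?_ (hκle t₀ ht₀I)
    obtain ⟨cc, hc1, hc2⟩ := EReal.exists_between_coe_real ht₀a
    have h1 : (0 : ℝ → ℝ) ≤ᵐ[volume.restrict {s : ℝ | a < (s : EReal) ∧ s < t₀}]
        fun s => Real.exp (∫ τ in s..t₀, max (l1 τ).re (l2 τ).re) :=
      ae_of_all _ fun s => (Real.exp_pos _).le
    rw [kappa12]
    rw [setIntegral_pos_iff_support_of_nonneg_ae h1 (hker t₀ ht₀I)]
    have hIoo : Ioo cc t₀ ⊆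
        Function.support (fun s => Real.exp (∫ τ in s..t₀, max (l1 τ).re (l2 τ).re))
          ∩ {s : ℝ | a < (s : EReal) ∧ s < t₀} := fun s hs =>
      ⟨(Real.exp_pos _).ne', ⟨lt_trans hc1 (EReal.coe_lt_coe_iff.2 hs.1), hs.2⟩⟩
    calc (0 : ENNReal) < volume (Ioo cc t₀) := by
          rw [Real.volume_Ioo]
          exact ENNReal.ofReal_pos.2 (by linarith [EReal.coe_lt_coe_iff.1 hc2])
      _ ≤ _ := measure_mono hIoo
  have hmv : ∀ (t : ℝ) (v : Fin 2 → ℂ),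
      (!![l1 t, 0; 0, l2 t]).mulVec v = ![l1 t * v 0, l2 t * v 1] := by
    intro t v
    funext i
    fin_cases i <;> simp [Matrix.mulVec, dotProduct, Fin.sum_univ_two]
  have hmain : ∀ ε : ℝ, 0 < ε → ∀ φ φd : ℝ → Fin 2 → ℂ,
      (∀ t ∈ I, HasDerivWithinAt φ (φd t) I t) → ContinuousOn φd I →
      (∀ t ∈ I, ‖φd t - (!![l1 t, 0; 0, l2 t]).mulVec (φ t)‖ ≤ ε) →
      ∃ x : ℝ → Fin 2 → ℂ,
        (∀ t ∈ I, HasDerivWithinAt x ((!![l1 t, 0; 0, l2 t]).mulVec (x t)) I t) ∧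
        ∀ t ∈ I, ‖φ t - x t‖ ≤ K * ε := by
    intro ε hε φ φd hφ hφd hbnd
    have hφ1 : ∀ t ∈ I, HasDerivWithinAt (fun s => φ s 0) (φd t 0) I t := fun t ht =>
      (hasDerivWithinAt_pi.1 (hφ t ht)) 0
    have hφ2 : ∀ t ∈ I, HasDerivWithinAt (fun s => φ s 1) (φd t 1) I t := fun t ht =>
      (hasDerivWithinAt_pi.1 (hφ t ht)) 1
    have hψ1 : ContinuousOn (fun t => φd t 0) I := (continuous_apply 0).comp_continuousOn hφd
    have hψ2 : ContinuousOn (fun t => φd t 1) I := (continuous_apply 1).comp_continuousOn hφd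
    have hbnd1 : ∀ t ∈ I, ‖φd t 0 - l1 t * φ t 0‖ ≤ ε := by
      intro t ht
      have h1 : φd t 0 - l1 t * φ t 0 = (φd t - (!![l1 t, 0; 0, l2 t]).mulVec (φ t)) 0 := by
        rw [hmv]; simp
      rw [h1]
      exact (norm_le_pi_norm _ 0).trans (hbnd t ht)
    have hbnd2 : ∀ t ∈ I, ‖φd t 1 - l2 t * φ t 1‖ ≤ ε := by
      intro t ht
      have h1 : φd t 1 - l2 t * φ t 1 = (φd t - (!![l1 t, 0; 0, l2 t]).mulVec (φ t)) 1 := by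
        rw [hmv]; simp
      rw [h1]
      exact (norm_le_pi_norm _ 1).trans (hbnd t ht)
    obtain ⟨c1, hc1⟩ := scalar_core a hconv ht₀I ht₀a haI hJI hl1 hL
      (fun τ _ => le_max_left _ _) hker hφ1 hψ1 hbnd1
    obtain ⟨c2, hc2⟩ := scalar_core a hconv ht₀I ht₀a haI hJI hl2 hL
      (fun τ _ => le_max_right _ _) hker hφ2 hψ2 hbnd2
    refine ⟨fun s => ![c1 * Complex.exp (∫ τ in t₀..s, l1 τ),
      c2 * Complex.exp (∫ τ in t₀..s, l2 τ)], ?_, ?_⟩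
    · intro t ht
      rw [hasDerivWithinAt_pi]
      intro i
      fin_cases i
      · simp only [hmv, Matrix.cons_val_zero]
        have h := ((hasDerivWithinAt_primitive' hconv hl1 ht₀I ht).cexp).const_mul c1
        refine h.congr_deriv ?_
        simp only [Fin.mk_zero, Fin.mk_one, Matrix.cons_val_zero, Matrix.cons_val_one,
          Matrix.head_cons, Fin.isValue]
        ring
      · simp only [hmv, Matrix.cons_val_one, Matrix.head_cons]
        have h := ((hasDerivWithinAt_primitive' hconv hl2 ht₀I ht).cexp).const_mul c2
        refine h.congr_deriv ?_
        simp only [Fin.mk_zero, Fin.mk_one, Matrix.cons_val_zero, Matrix.cons_val_one,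
          Matrix.head_cons, Fin.isValue]
        ring
    · intro t ht
      rw [pi_norm_le_iff_of_nonneg (mul_nonneg hKpos.le hε.le)]
      have hκK : ε * kappa12 a l1 l2 t ≤ K * ε := by
        rw [mul_comm]
        exact mul_le_mul_of_nonneg_right (hκle t ht) hε.le
      intro i
      fin_cases i
      · simp only [Pi.sub_apply, Matrix.cons_val_zero]
        exact le_trans (hc1 t ht) hκK
      · simp only [Pi.sub_apply, Matrix.cons_val_one, Matrix.head_cons]
        exact le_trans (hc2 t ht) hκK
  constructor
  · exact ⟨hKpos, hmain⟩
  · intro htend ε hε φ φd hφ hφd hbnd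
    obtain ⟨x, hx1, hx2⟩ := hmain ε hε φ φd hφ hφd hbnd
    refine ⟨x, ⟨hx1, hx2⟩, ?_⟩
    rintro y ⟨hy1, hy2⟩
    have hFne : (Filter.comap (fun x : ℝ => (x : EReal)) (nhdsWithin a (Ioi a))).NeBot := by
      rw [Filter.comap_neBot_iff]
      intro U hU
      obtain ⟨u, hau, hsub⟩ := (mem_nhdsGT_iff_exists_Ioo_subset' hab).1 hU
      obtain ⟨r, hr1, hr2⟩ := EReal.exists_between_coe_real hau
      exact ⟨r, hsub ⟨hr1, hr2⟩⟩
    have hev : ∀ᶠ t : ℝ in Filter.comap (fun x : ℝ => (x : EReal)) (nhdsWithin a (Ioi a)),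
        a < (t : EReal) ∧ t < t₀ := by
      have h1 : Ioi a ∩ Iio (t₀ : EReal) ∈ nhdsWithin a (Ioi a) :=
        inter_mem self_mem_nhdsWithin (nhdsWithin_le_nhds (Iio_mem_nhds ht₀a))
      filter_upwards [Filter.preimage_mem_comap h1] with t ht2
      exact ⟨ht2.1, EReal.coe_lt_coe_iff.1 ht2.2⟩
    have hcomp : ∀ li : ℝ → ℂ, ContinuousOn li I →
        (∀ s ∈ I, min (-(l1 s).re) (-(l2 s).re) ≤ -(li s).re) →
        Tendsto (fun t => (∫ τ in t₀..t, li τ).re)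
          (Filter.comap (fun x : ℝ => (x : EReal)) (nhdsWithin a (Ioi a))) atTop := by
      intro li hli hmin
      refine tendsto_atTop_mono' _ ?_ (htend t₀ ht₀a ht₀b)
      filter_upwards [hev] with t ht2
      have htI : t ∈ I := hI1 t ht2.1 (lt_trans (EReal.coe_lt_coe_iff.2 ht2.2) ht₀b)
      have hIcc : Icc t t₀ ⊆ I := hoc.out htI ht₀I
      have h1 : (∫ τ in t₀..t, li τ).re = ∫ τ in t₀..t, (li τ).re := by
        have hint : IntervalIntegrable li volume t₀ t :=
          (hli.mono (hoc.uIcc_subset ht₀I htI)).intervalIntegrable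
        have := Complex.reCLM.intervalIntegral_comp_comm hint
        simpa using this.symm
      rw [h1, intervalIntegral.integral_symm t t₀, ← intervalIntegral.integral_neg]
      refine intervalIntegral.integral_mono_on ht2.2.le
        ((((hLre1.neg.inf hLre2.neg)).mono
          (hoc.uIcc_subset htI ht₀I)).intervalIntegrable)
        ((((Complex.continuous_re.comp_continuousOn hli).neg).mono
          (hoc.uIcc_subset htI ht₀I)).intervalIntegrable)
        (fun s hs => hmin s (hIcc hs))
    have hzero : ∀ (i : Fin 2) (li : ℝ → ℂ), ContinuousOn li I →
        (∀ s ∈ I, min (-(l1 s).re) (-(l2 s).re) ≤ -(li s).re) →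
        (∀ t ∈ I, HasDerivWithinAt (fun s => y s i - x s i) (li t * (y t i - x t i)) I t) →
        ∀ t ∈ I, y t i = x t i := by
      intro i li hli hmin hz t ht
      have hprim := fun u (hu : u ∈ I) => hasDerivWithinAt_primitive' hconv hli ht₀I hu
      have hsol := scalar_sol hconv ht₀I hz hprim
      have hbound : ∀ u ∈ I, ‖y u i - x u i‖ ≤ 2 * (K * ε) := by
        intro u hu
        have h1 : y u i - x u i = (y u - φ u) i + (φ u - x u) i := by simp
        rw [h1]
        calc ‖(y u - φ u) i + (φ u - x u) i‖
            ≤ ‖(y u - φ u) i‖ + ‖(φ u - x u) i‖ := norm_add_le _ _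
          _ ≤ ‖y u - φ u‖ + ‖φ u - x u‖ :=
              add_le_add (norm_le_pi_norm _ i) (norm_le_pi_norm _ i)
          _ ≤ K * ε + K * ε := by
              rw [← norm_sub_rev (φ u)]
              exact add_le_add (hy2 u hu) (hx2 u hu)
          _ = 2 * (K * ε) := by ring
      have hz0 : y t₀ i - x t₀ i = 0 := by
        by_contra h0
        have hn : 0 < ‖y t₀ i - x t₀ i‖ := norm_pos_iff.2 h0
        have htt : Tendsto (fun u => ‖y t₀ i - x t₀ i‖ * Real.exp ((∫ τ in t₀..u, li τ).re))
            (Filter.comap (fun x : ℝ => (x : EReal)) (nhdsWithin a (Ioi a))) atTop :=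
          Filter.Tendsto.const_mul_atTop hn
            (Real.tendsto_exp_atTop.comp (hcomp li hli hmin))
        obtain ⟨u, ⟨hua, hut₀⟩, hgt⟩ := (hev.and (htt.eventually_gt_atTop (2 * (K * ε)))).exists
        have huI : u ∈ I := hI1 u hua (lt_trans (EReal.coe_lt_coe_iff.2 hut₀) ht₀b)
        have heq : ‖y u i - x u i‖
            = ‖y t₀ i - x t₀ i‖ * Real.exp ((∫ τ in t₀..u, li τ).re) := by
          rw [hsol u huI, norm_mul, Complex.norm_exp]
        have := hbound u huI
        rw [heq] at this
        linarith
      have := hsol t ht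
      rw [hz0, zero_mul] at this
      exact sub_eq_zero.1 this
    intro t ht
    funext i
    have hzder : ∀ (i : Fin 2) (li : ℝ → ℂ),
        (∀ (u : ℝ) (v : Fin 2 → ℂ), (!![l1 u, 0; 0, l2 u]).mulVec v i = li u * v i) →
        ∀ u ∈ I, HasDerivWithinAt (fun s => y s i - x s i) (li u * (y u i - x u i)) I u := by
      intro i li hcomp' u hu
      have h := ((hasDerivWithinAt_pi.1 (hy1 u hu)) i).sub ((hasDerivWithinAt_pi.1 (hx1 u hu)) i)
      rw [hcomp' u (y u), hcomp' u (x u)] at h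
      refine h.congr_deriv ?_
      ring
    fin_cases i
    · exact hzero 0 l1 hl1 (fun s _ => min_le_left _ _)
        (hzder 0 l1 (fun u v => by rw [hmv]; simp)) t ht
    · exact hzero 1 l2 hl2 (fun s _ => min_le_right _ _)
        (hzder 1 l2 (fun u v => by rw [hmv]; simp)) t ht
end
end
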